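/- arXiv:1610.07029 — 5 statements merged into one kernel-verified Lean document; each statement's English description precedes it below -/
import Mathlib

section
/- Let A be a 2×2 expanding integer matrix with characteristic polynomial f(x) = x² + px + q and Δ = p² − 4q ≥ 0, and let v ∈ ℤ² be such that {v, Av} is linearly independent over ℝ. Define α_i, β_i by A^{−i}v = α_i v + β_i Av, and set α̃ = ∑_{i=1}^∞ |α_i| and β̃ = ∑_{i=1}^∞ |β_i|. Then: if q > 0, α̃ = (|p| − 1)/(q − |p| + 1) and β̃ = 1/(q − |p| + 1); if q < 0, α̃ = (|p| + 1)/(|q| − |p| − 1) and β̃ = 1/(|q| − |p| − 1). -/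
open Matrix Polynomial Pointwise

noncomputable section

/-- The real matrix obtained from a 2×2 integer matrix. -/
def toR (A : Matrix (Fin 2) (Fin 2) ℤ) : Matrix (Fin 2) (Fin 2) ℝ :=
  A.map (Int.cast : ℤ → ℝ)

/-- The real vector obtained from an integer vector. -/
def vecR (v : Fin 2 → ℤ) : Fin 2 → ℝ := fun j => (v j : ℝ)

/-- A 2×2 integer matrix is expanding if every complex eigenvalue has modulus > 1. -/
def IsExpanding (A : Matrix (Fin 2) (Fin 2) ℤ) : Prop :=
  ∀ z ∈ spectrum ℂ (A.map (Int.cast : ℤ → ℂ)), 1 < ‖z‖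

/-- The self-affine fractal `T(A, D v)`, i.e. the set of all sums
`∑_{i=1}^∞ A^{-i} (d_i v)` with digits `d_i ∈ D`. -/
def attractor (A : Matrix (Fin 2) (Fin 2) ℤ) (D : Set ℤ) (v : Fin 2 → ℤ) :
    Set (Fin 2 → ℝ) :=
  { x | ∃ d : ℕ → ℤ, (∀ i, d i ∈ D) ∧
      HasSum (fun i : ℕ => (d i : ℝ) • ((toR A)⁻¹ ^ (i + 1)).mulVec (vecR v)) x }


lemma aux_geom_summable (x : ℝ) (h : |x| < 1) : Summable (fun n : ℕ => x ^ (n + 1)) := by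
  have : Summable (fun n : ℕ => x ^ n) :=
    summable_geometric_of_norm_lt_one (by simpa [Real.norm_eq_abs] using h)
  simpa [pow_succ'] using this.mul_left x

lemma aux_geom_tsum (x : ℝ) (h : |x| < 1) : ∑' n : ℕ, x ^ (n + 1) = x / (1 - x) := by
  have hg : ∑' n : ℕ, x ^ n = (1 - x)⁻¹ :=
    tsum_geometric_of_norm_lt_one (by simpa [Real.norm_eq_abs] using h)
  calc ∑' n : ℕ, x ^ (n + 1) = ∑' n : ℕ, x * x ^ n := by simp [pow_succ']
    _ = x * (1 - x)⁻¹ := by rw [tsum_mul_left, hg]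
    _ = x / (1 - x) := by rw [div_eq_mul_inv]

lemma aux_cauchy_eq (x y : ℝ) (hx0 : 0 ≤ x) (hx1 : x < 1) (hy0 : 0 ≤ y) (hy1 : y < 1) :
    ∑' i : ℕ, ∑ j ∈ Finset.range (i + 1), x ^ (i + 1 - j) * y ^ (j + 1)
      = (y / (1 - y)) * (x / (1 - x)) := by
  have hx : |x| < 1 := by rwa [abs_of_nonneg hx0]
  have hy : |y| < 1 := by rwa [abs_of_nonneg hy0]
  have hf : Summable fun n : ℕ => ‖y ^ (n + 1)‖ := by
    simpa [Real.norm_eq_abs, abs_pow, abs_of_nonneg hy0] using aux_geom_summable y hy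
  have hg : Summable fun n : ℕ => ‖x ^ (n + 1)‖ := by
    simpa [Real.norm_eq_abs, abs_pow, abs_of_nonneg hx0] using aux_geom_summable x hx
  have key := tsum_mul_tsum_eq_tsum_sum_range_of_summable_norm
    (f := fun n : ℕ => y ^ (n + 1)) (g := fun n : ℕ => x ^ (n + 1)) hf hg
  rw [aux_geom_tsum y hy, aux_geom_tsum x hx] at key
  rw [key]
  refine tsum_congr fun i => ?_
  refine Finset.sum_congr rfl fun j hj => ?_
  have hji : j ≤ i := by simpa [Nat.lt_succ_iff] using hj
  have : i + 1 - j = (i - j) + 1 := by omega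
  rw [this, mul_comm]

lemma aux_cauchy_summable (x y : ℝ) (hx0 : 0 ≤ x) (hx1 : x < 1) (hy0 : 0 ≤ y) (hy1 : y < 1) :
    Summable (fun i : ℕ => ∑ j ∈ Finset.range (i + 1), x ^ (i + 1 - j) * y ^ (j + 1)) := by
  have hx : |x| < 1 := by rwa [abs_of_nonneg hx0]
  have hy : |y| < 1 := by rwa [abs_of_nonneg hy0]
  have hf : Summable fun n : ℕ => ‖y ^ (n + 1)‖ := by
    simpa [Real.norm_eq_abs, abs_pow, abs_of_nonneg hy0] using aux_geom_summable y hy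
  have hg : Summable fun n : ℕ => ‖x ^ (n + 1)‖ := by
    simpa [Real.norm_eq_abs, abs_pow, abs_of_nonneg hx0] using aux_geom_summable x hx
  have key := (summable_norm_sum_mul_range_of_summable_norm
    (f := fun n : ℕ => y ^ (n + 1)) (g := fun n : ℕ => x ^ (n + 1)) hf hg).of_norm
  refine key.congr fun i => ?_
  refine Finset.sum_congr rfl fun j hj => ?_
  have hji : j ≤ i := by simpa [Nat.lt_succ_iff] using hj
  have : i + 1 - j = (i - j) + 1 := by omega
  rw [this, mul_comm]

lemma aux_sign (σ x y : ℝ) (hσ : σ = 1 ∨ σ = -1) (hx : 0 ≤ x) (hy : 0 ≤ y) (i : ℕ) :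
    |∑ j ∈ Finset.range i, (σ * x) ^ (i - j) * (σ * y) ^ (j + 1)|
      = ∑ j ∈ Finset.range i, x ^ (i - j) * y ^ (j + 1) := by
  have h1 : ∑ j ∈ Finset.range i, (σ * x) ^ (i - j) * (σ * y) ^ (j + 1)
      = σ ^ (i + 1) * ∑ j ∈ Finset.range i, x ^ (i - j) * y ^ (j + 1) := by
    rw [Finset.mul_sum]
    refine Finset.sum_congr rfl fun j hj => ?_
    have hji : j < i := Finset.mem_range.mp hj
    have : (i - j) + (j + 1) = i + 1 := by omega
    rw [mul_pow, mul_pow, ← this, pow_add]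
    ring
  have h2 : (0:ℝ) ≤ ∑ j ∈ Finset.range i, x ^ (i - j) * y ^ (j + 1) :=
    Finset.sum_nonneg fun j _ => mul_nonneg (pow_nonneg hx _) (pow_nonneg hy _)
  rw [h1, abs_mul, abs_pow]
  rcases hσ with h | h <;> simp [h, abs_of_nonneg h2]

lemma aux_abs1 (a b : ℝ) (ha : 1 < a) (hb : 1 < b) (hba : b ≤ a) (n : ℕ) :
    |(1 / a) ^ n - (-(1 / b)) ^ n| = (1 / b) ^ n - (-(1 / a)) ^ n := by
  have ha0 : (0:ℝ) < a := by linarith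
  have hb0 : (0:ℝ) < b := by linarith
  have hle : (1:ℝ) / a ≤ 1 / b := by
    apply div_le_div_of_nonneg_left <;> linarith
  rcases Nat.even_or_odd n with he | ho
  · rw [he.neg_pow, he.neg_pow]
    have h1 : (1 / a : ℝ) ^ n ≤ (1 / b) ^ n :=
      pow_le_pow_left₀ (by positivity) hle n
    rw [abs_of_nonpos (by linarith)]
    ring
  · rw [ho.neg_pow, ho.neg_pow]
    have h1 : (0:ℝ) ≤ (1 / a) ^ n := by positivity
    have h2 : (0:ℝ) ≤ (1 / b) ^ n := by positivity
    rw [abs_of_nonneg (by linarith)]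
    ring

lemma aux_abs2 (a b : ℝ) (ha : 1 < a) (hb : 1 < b) (hab : a ≤ b) (n : ℕ) :
    |(1 / a) ^ n - (-(1 / b)) ^ n| = (1 / a) ^ n - (-(1 / b)) ^ n := by
  have ha0 : (0:ℝ) < a := by linarith
  have hb0 : (0:ℝ) < b := by linarith
  have hle : (1:ℝ) / b ≤ 1 / a := by
    apply div_le_div_of_nonneg_left <;> linarith
  apply abs_of_nonneg
  rcases Nat.even_or_odd n with he | ho
  · rw [he.neg_pow]
    have h1 : (1 / b : ℝ) ^ n ≤ (1 / a) ^ n := pow_le_pow_left₀ (by positivity) hle n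
    linarith
  · rw [ho.neg_pow]
    have h1 : (0:ℝ) ≤ (1 / a) ^ n := by positivity
    have h2 : (0:ℝ) ≤ (1 / b) ^ n := by positivity
    linarith

lemma aux_frac1 (t : ℝ) (ht : 1 < t) : (1/t)/(1-1/t) = 1/(t-1) := by
  have h0 : t ≠ 0 := by linarith
  have h1 : t - 1 ≠ 0 := by intro hc; rw [sub_eq_zero] at hc; rw [hc] at ht; exact lt_irrefl 1 ht
  field_simp

lemma aux_frac2 (t : ℝ) (ht : 1 < t) : (-(1/t))/(1-(-(1/t))) = -(1/(t+1)) := by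
  have h0 : t ≠ 0 := by linarith
  have h1 : t + 1 ≠ 0 := by linarith
  field_simp
  rw [sub_neg_eq_add, div_self h1]

lemma aux_alpha (c : ℝ) (g f : ℕ → ℝ) (hg : Summable g) (hrel : ∀ i, f i = c * g (i + 1))
    (hc : c ≠ 0) (hg0 : g 0 = 1 / c) : ∑' i, f i = c * (∑' i, g i) - 1 := by
  calc ∑' i, f i = ∑' i, c * g (i + 1) := tsum_congr hrel
    _ = c * ∑' i, g (i + 1) := tsum_mul_left
    _ = c * ((∑' i, g i) - g 0) := by rw [hg.tsum_eq_zero_add]; ring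
    _ = c * (∑' i, g i) - 1 := by rw [hg0]; field_simp

set_option maxHeartbeats 2000000 in
/-- exact values of `α̃ = ∑_{i≥1} |α_i|` and `β̃ = ∑_{i≥1} |β_i|`
when `Δ = p² - 4q ≥ 0`. -/
theorem stmt6 (A : Matrix (Fin 2) (Fin 2) ℤ) (p q : ℤ)
    (hA : IsExpanding A)
    (hchar : A.charpoly = X ^ 2 + C p * X + C q)
    (hΔ : 0 ≤ p ^ 2 - 4 * q)
    (v : Fin 2 → ℤ)
    (hv : LinearIndependent ℝ ![vecR v, (toR A).mulVec (vecR v)])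
    (α β : ℕ → ℝ)
    (hαβ : ∀ i : ℕ, 1 ≤ i →
      ((toR A)⁻¹ ^ i).mulVec (vecR v) = α i • vecR v + β i • (toR A).mulVec (vecR v)) :
    (0 < q →
      (∑' i : ℕ, |α (i + 1)|) = ((|p| : ℝ) - 1) / ((q : ℝ) - (|p| : ℝ) + 1) ∧
      (∑' i : ℕ, |β (i + 1)|) = 1 / ((q : ℝ) - (|p| : ℝ) + 1)) ∧
    (q < 0 →
      (∑' i : ℕ, |α (i + 1)|) = ((|p| : ℝ) + 1) / ((|q| : ℝ) - (|p| : ℝ) - 1) ∧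
      (∑' i : ℕ, |β (i + 1)|) = 1 / ((|q| : ℝ) - (|p| : ℝ) - 1)) := by
  rcases eq_or_ne q 0 with hq | hq
  · exact ⟨fun h => absurd h (by omega), fun h => absurd h (by omega)⟩
  -- trace and determinant of A
  have hcoeff0 : A.charpoly.coeff 0 = q := by
    rw [hchar]; simp
  have hcoeff1 : A.charpoly.coeff 1 = p := by
    rw [hchar]
    simp only [coeff_add, coeff_X_pow, coeff_C_mul, coeff_X_one, coeff_C]
    norm_num
  have hdetA : A.det = q := by
    have := Matrix.det_eq_sign_charpoly_coeff A
    simpa [hcoeff0] using this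
  have htrA : A.trace = -p := by
    have := Matrix.trace_eq_neg_charpoly_coeff A
    simpa [hcoeff1] using this
  -- roots of the characteristic polynomial are large
  have habs : ∀ t : ℝ, t ^ 2 + p * t + q = 0 → 1 < |t| := by
    intro t ht
    have hmem : (t : ℂ) ∈ spectrum ℂ (A.map (Int.cast : ℤ → ℂ)) := by
      rw [spectrum.mem_iff]
      intro hu
      rw [Matrix.isUnit_iff_isUnit_det] at hu
      have hdet0 : (algebraMap ℂ (Matrix (Fin 2) (Fin 2) ℂ) (t:ℂ) - A.map (Int.cast : ℤ → ℂ)).det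
          = 0 := by
        rw [Algebra.algebraMap_eq_smul_one]
        rw [Matrix.det_fin_two]
        simp only [Matrix.sub_apply, Matrix.smul_apply, Matrix.one_apply, Matrix.map_apply]
        have e1 : A.trace = A 0 0 + A 1 1 := Matrix.trace_fin_two A
        have e2 : A.det = A 0 0 * A 1 1 - A 0 1 * A 1 0 := Matrix.det_fin_two A
        have htr : ((A 0 0 : ℂ)) + (A 1 1 : ℂ) = (-p : ℤ) := by
          rw [← htrA, e1]; push_cast; ring
        have hdt : ((A 0 0 : ℂ)) * (A 1 1 : ℂ) - (A 0 1 : ℂ) * (A 1 0 : ℂ) = (q : ℤ) := by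
          rw [← hdetA, e2]; push_cast; ring
        have ht' : (t:ℂ) ^ 2 + (p:ℤ) * t + (q:ℤ) = 0 := by
          exact_mod_cast congrArg (fun x : ℝ => (x : ℂ)) ht
        push_cast at htr hdt
        simp only [if_true, if_false, Fin.isValue]
        norm_num
        linear_combination ht' - (t:ℂ) * htr + hdt
      rw [hdet0] at hu
      simp at hu
    have := hA _ hmem
    simpa using this
  -- the two real roots
  have hq' : (q : ℝ) ≠ 0 := Int.cast_ne_zero.mpr hq
  set Δ : ℝ := (p:ℝ) ^ 2 - 4 * q with hΔdef
  have hΔ0 : (0:ℝ) ≤ Δ := by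
    have : ((p ^ 2 - 4 * q : ℤ) : ℝ) ≥ 0 := by exact_mod_cast hΔ
    push_cast at this
    linarith [this]
  have hsq : Real.sqrt Δ ^ 2 = Δ := Real.sq_sqrt hΔ0
  set lam : ℝ := ((-p : ℝ) + Real.sqrt Δ) / 2 with hlamdef
  set mu : ℝ := ((-p : ℝ) - Real.sqrt Δ) / 2 with hmudef
  have hsum : lam + mu = -(p:ℝ) := by rw [hlamdef, hmudef]; ring
  have hprod : lam * mu = (q:ℝ) := by
    have : lam * mu = ((p:ℝ)^2 - Real.sqrt Δ ^ 2) / 4 := by rw [hlamdef, hmudef]; ring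
    rw [this, hsq, hΔdef]; ring
  have hlam_root : lam ^ 2 + p * lam + q = 0 := by
    linear_combination lam * hsum - hprod
  have hmu_root : mu ^ 2 + p * mu + q = 0 := by
    linear_combination mu * hsum - hprod
  have hlam_abs : 1 < |lam| := habs lam hlam_root
  have hmu_abs : 1 < |mu| := habs mu hmu_root
  have hlam0 : lam ≠ 0 := by intro h; rw [h] at hlam_abs; norm_num at hlam_abs
  have hmu0 : mu ≠ 0 := by intro h; rw [h] at hmu_abs; norm_num at hmu_abs
  have hge : mu ≤ lam := by
    rw [hlamdef, hmudef]
    have := Real.sqrt_nonneg Δ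
    linarith
  clear_value lam mu
  clear hlamdef hmudef hsq
  -- matrix facts
  set B : Matrix (Fin 2) (Fin 2) ℝ := toR A with hBdef
  have hBdet : B.det = (q : ℝ) := by
    have : (Int.castRingHom ℝ) A.det = (A.map (Int.castRingHom ℝ)).det := RingHom.map_det _ _
    rw [hdetA] at this
    simpa [hBdef, toR] using this.symm
  have hBcharpoly : B.charpoly = X ^ 2 + C (p:ℝ) * X + C (q:ℝ) := by
    have : B.charpoly = (A.charpoly).map (Int.castRingHom ℝ) := by
      rw [hBdef]
      exact (Matrix.charpoly_map A (Int.castRingHom ℝ))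
    rw [this, hchar]
    simp [Polynomial.map_add, Polynomial.map_pow, Polynomial.map_mul]
  have hCH : B * B + (p:ℝ) • B + (q:ℝ) • (1 : Matrix (Fin 2) (Fin 2) ℝ) = 0 := by
    have h0 := Matrix.aeval_self_charpoly B
    rw [hBcharpoly] at h0
    simp only [map_add, map_pow, _root_.map_mul, aeval_X, aeval_C,
      Algebra.algebraMap_eq_smul_one, smul_mul_assoc, one_mul] at h0
    rwa [pow_two] at h0
  have hBinv : B⁻¹ = (-(1/(q:ℝ))) • (B + (p:ℝ) • 1) := by
    apply Matrix.inv_eq_right_inv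
    have h1 : B * (B + (p:ℝ) • 1) = -((q:ℝ) • 1) := by
      rw [mul_add, mul_smul_comm, mul_one]
      have h2 := hCH
      rw [add_eq_zero_iff_eq_neg] at h2
      exact h2
    rw [mul_smul_comm, h1, smul_neg, smul_smul]
    have h3 : (-(1/(q:ℝ)) * q) = -1 := by field_simp
    rw [h3]
    simp
  have hBunit : IsUnit B.det := by rw [hBdet]; exact isUnit_iff_ne_zero.mpr hq'
  have hBinvB : B⁻¹ * B = 1 := Matrix.nonsing_inv_mul B hBunit
  -- uniqueness of coefficients
  have huniq : ∀ s t : ℝ, s • vecR v + t • B.mulVec (vecR v) = 0 → s = 0 ∧ t = 0 :=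
    fun s t h => LinearIndependent.pair_iff.mp hv s t h
  -- action of B⁻¹
  have hBinvv : B⁻¹.mulVec (vecR v)
      = (-(p/q) : ℝ) • vecR v + (-(1/q) : ℝ) • B.mulVec (vecR v) := by
    rw [hBinv]
    rw [Matrix.smul_mulVec, Matrix.add_mulVec, Matrix.smul_mulVec,
      Matrix.one_mulVec]
    funext j
    simp only [Pi.smul_apply, Pi.add_apply, smul_eq_mul]
    ring
  -- base case
  have hbase : α 1 = -((p:ℝ)/q) ∧ β 1 = -(1/(q:ℝ)) := by
    have e1 := hαβ 1 le_rfl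
    rw [pow_one] at e1
    have e : α 1 • vecR v + β 1 • B.mulVec (vecR v)
        = (-(p/q) : ℝ) • vecR v + (-(1/q) : ℝ) • B.mulVec (vecR v) := by
      rw [← e1, ← hBinvv]
    have e0 := huniq (α 1 + (p:ℝ)/q) (β 1 + 1/(q:ℝ)) (by
      have : (α 1 + (p:ℝ)/q) • vecR v + (β 1 + 1/(q:ℝ)) • B.mulVec (vecR v)
          = (α 1 • vecR v + β 1 • B.mulVec (vecR v))
            - ((-(p/q) : ℝ) • vecR v + (-(1/q) : ℝ) • B.mulVec (vecR v)) := by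
        funext j
        simp only [Pi.add_apply, Pi.sub_apply, Pi.smul_apply, smul_eq_mul]
        ring
      rw [this, e, sub_self])
    constructor
    · linarith [e0.1]
    · linarith [e0.2]
  -- recurrence
  have hstep : ∀ i : ℕ, 1 ≤ i →
      α (i+1) = β i - ((p:ℝ)/q) * α i ∧ β (i+1) = -(α i)/(q:ℝ) := by
    intro i hi
    have e1 := hαβ i hi
    have e2 := hαβ (i+1) (by omega)
    have e3 : ((B⁻¹ : Matrix (Fin 2) (Fin 2) ℝ) ^ (i+1)).mulVec (vecR v)
        = (β i - ((p:ℝ)/q) * α i) • vecR v + (-(α i)/(q:ℝ)) • B.mulVec (vecR v) := by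
      rw [pow_succ', ← Matrix.mulVec_mulVec, e1]
      rw [Matrix.mulVec_add, Matrix.mulVec_smul, Matrix.mulVec_smul]
      rw [Matrix.mulVec_mulVec, hBinvB, Matrix.one_mulVec, hBinvv]
      funext j
      simp only [Pi.add_apply, Pi.smul_apply, smul_eq_mul]
      ring
    rw [e3] at e2
    have e0 := huniq (α (i+1) - (β i - ((p:ℝ)/q) * α i)) (β (i+1) - (-(α i)/(q:ℝ))) (by
      have : (α (i+1) - (β i - ((p:ℝ)/q) * α i)) • vecR v
            + (β (i+1) - (-(α i)/(q:ℝ))) • B.mulVec (vecR v)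
          = (α (i+1) • vecR v + β (i+1) • B.mulVec (vecR v))
            - ((β i - ((p:ℝ)/q) * α i) • vecR v + (-(α i)/(q:ℝ)) • B.mulVec (vecR v)) := by
        funext j
        simp only [Pi.add_apply, Pi.sub_apply, Pi.smul_apply, smul_eq_mul]
        ring
      rw [this, ← e2, sub_self])
    constructor
    · linarith [e0.1]
    · linarith [e0.2]
  -- the auxiliary sequence h
  set r : ℝ := lam⁻¹ with hrdef
  set s : ℝ := mu⁻¹ with hsdef
  have hadd : r + s = -(p:ℝ)/q := by
    rw [hrdef, hsdef]
    rw [inv_add_inv hlam0 hmu0, hsum, hprod]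
  have hmul : r * s = 1/(q:ℝ) := by
    rw [hrdef, hsdef, ← mul_inv, hprod, one_div]
  set h : ℕ → ℝ := fun i => ∑ j ∈ Finset.range i, r ^ (i - j) * s ^ (j + 1) with hhdef
  have hrec : ∀ i : ℕ, h (i+1) = r * h i + r * s ^ (i+1) := by
    intro i
    rw [hhdef]
    simp only []
    rw [Finset.sum_range_succ]
    have e1 : i + 1 - i = 1 := by omega
    rw [e1, pow_one]
    have e2 : ∑ j ∈ Finset.range i, r ^ (i + 1 - j) * s ^ (j + 1)
        = r * ∑ j ∈ Finset.range i, r ^ (i - j) * s ^ (j + 1) := by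
      rw [Finset.mul_sum]
      refine Finset.sum_congr rfl fun j hj => ?_
      have hji : j < i := Finset.mem_range.mp hj
      have e3 : i + 1 - j = (i - j) + 1 := by omega
      rw [e3, pow_succ']
      ring
    rw [e2]
  have hrec2 : ∀ i : ℕ, h (i+2) = (r+s) * h (i+1) - (r*s) * h i := by
    intro i
    have a1 := hrec i
    have a2 := hrec (i+1)
    linear_combination a2 - s * a1
  have hform : ∀ i : ℕ, α (i+1) = (q:ℝ) * h (i+2) ∧ β (i+1) = -h (i+1) := by
    intro i
    induction i with
    | zero =>
      constructor
      · have hh2 : h 2 = r*s*(r+s) := by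
          rw [hhdef]
          simp only []
          rw [Finset.sum_range_succ, Finset.sum_range_one]
          norm_num
          ring
        rw [hbase.1, hh2, hmul, hadd]
        field_simp
      · have hh1 : h 1 = r*s := by
          rw [hhdef]
          simp only []
          rw [Finset.sum_range_one]
          norm_num
        rw [hbase.2, hh1, hmul]
    | succ i ih =>
      have hs := hstep (i+1) (by omega)
      constructor
      · rw [hs.1, ih.1, ih.2]
        have e4 : h (i+1+2) = (r+s) * h (i+2) - (r*s) * h (i+1) := hrec2 (i+1)
        rw [e4, hadd, hmul]
        field_simp
        ring
      · rw [hs.2, ih.1]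
        have : -((q:ℝ) * h (i+2))/(q:ℝ) = -h (i+2) := by
          field_simp
        rw [this]
  constructor
  · -- case 0 < q
    intro hqpos
    have hq0R : (0:ℝ) < q := by exact_mod_cast hqpos
    obtain ⟨σ, hσ, hrx, hsy, hsame⟩ : ∃ σ : ℝ, (σ = 1 ∨ σ = -1) ∧ r = σ * (1/|lam|) ∧
        s = σ * (1/|mu|) ∧ |lam + mu| = |lam| + |mu| := by
      rcases lt_or_gt_of_ne hmu0 with hneg | hpos
      · have hlamneg : lam < 0 := by
          rcases lt_or_gt_of_ne hlam0 with h1 | h1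
          · exact h1
          · nlinarith
        refine ⟨-1, Or.inr rfl, ?_, ?_, ?_⟩
        · rw [hrdef, abs_of_neg hlamneg]; field_simp
        · rw [hsdef, abs_of_neg hneg]; field_simp
        · rw [abs_of_neg (by linarith : lam + mu < 0), abs_of_neg hlamneg,
            abs_of_neg hneg]; ring
      · have hlampos : 0 < lam := by
          rcases lt_or_gt_of_ne hlam0 with h1 | h1
          · nlinarith
          · exact h1
        refine ⟨1, Or.inl rfl, ?_, ?_, ?_⟩
        · rw [hrdef, abs_of_pos hlampos]; field_simp
        · rw [hsdef, abs_of_pos hpos]; field_simp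
        · rw [abs_of_pos (by linarith : 0 < lam + mu), abs_of_pos hlampos,
            abs_of_pos hpos]
    have ha1 : 1 < |lam| := hlam_abs
    have hb1 : 1 < |mu| := hmu_abs
    have hx1 : (1:ℝ)/|lam| < 1 := by rw [div_lt_one (by linarith)]; linarith
    have hy1 : (1:ℝ)/|mu| < 1 := by rw [div_lt_one (by linarith)]; linarith
    have hx0 : (0:ℝ) ≤ 1/|lam| := by positivity
    have hy0 : (0:ℝ) ≤ 1/|mu| := by positivity
    have habsβ : ∀ i : ℕ, |β (i+1)|
        = ∑ j ∈ Finset.range (i+1), (1/|lam|)^(i+1-j) * (1/|mu|)^(j+1) := by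
      intro i
      rw [(hform i).2, abs_neg]
      have hh : h (i+1) = ∑ j ∈ Finset.range (i+1),
          (σ*(1/|lam|))^(i+1-j) * (σ*(1/|mu|))^(j+1) := by
        rw [hhdef]
        exact Finset.sum_congr rfl fun j _ => by rw [hrx, hsy]
      rw [hh]
      exact aux_sign σ (1/|lam|) (1/|mu|) hσ hx0 hy0 (i+1)
    have hsummβ : Summable (fun i : ℕ => |β (i+1)|) :=
      (aux_cauchy_summable (1/|lam|) (1/|mu|) hx0 hx1 hy0 hy1).congr
        fun i => (habsβ i).symm
    have hSβ : ∑' i : ℕ, |β (i+1)|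
        = ((1/|mu|)/(1-1/|mu|)) * ((1/|lam|)/(1-1/|lam|)) := by
      rw [tsum_congr habsβ]
      exact aux_cauchy_eq (1/|lam|) (1/|mu|) hx0 hx1 hy0 hy1
    have hqab : (q:ℝ) = |lam| * |mu| := by
      rw [← abs_mul, ← hprod, abs_of_pos]
      rw [hprod]; exact hq0R
    have hpcast : |(p:ℝ)| = |lam| + |mu| := by
      have h5 : ((p:ℤ):ℝ) = -(lam + mu) := by linarith [hsum]
      rw [h5, abs_neg, hsame]
    have hden : (q:ℝ) - |(p:ℝ)| + 1 = (|lam| - 1) * (|mu| - 1) := by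
      rw [hqab, hpcast]; ring
    have hαrel : ∀ i : ℕ, |α (i+1)| = |(q:ℝ)| * |β (i+1+1)| := by
      intro i
      have h2 := (hstep (i+1) (by omega)).2
      have h3 : α (i+1) = -(q:ℝ) * β (i+1+1) := by
        have := h2
        field_simp at this
        linarith [this]
      rw [h3, abs_mul, abs_neg]
    have hβ1 : |β 1| = 1 / |(q:ℝ)| := by
      rw [hbase.2, abs_neg, abs_div, abs_one]
    have hαsum := aux_alpha |(q:ℝ)| (fun i => |β (i+1)|) (fun i => |α (i+1)|)
      hsummβ hαrel (abs_ne_zero.mpr hq') hβ1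
    have hqabs : |(q:ℝ)| = (q:ℝ) := abs_of_pos hq0R
    constructor
    · rw [hαsum, hSβ, hqabs, hden, hqab, hpcast]
      have h1 : |lam| - 1 ≠ 0 := by linarith
      have h2 : |mu| - 1 ≠ 0 := by linarith
      field_simp
      ring
    · rw [hSβ, hden]
      have h1 : |lam| - 1 ≠ 0 := by linarith
      have h2 : |mu| - 1 ≠ 0 := by linarith
      field_simp
  · -- case q < 0
    intro hqneg
    have hq0R : (q:ℝ) < 0 := by exact_mod_cast hqneg
    have hlampos : 0 < lam := by
      rcases lt_or_gt_of_ne hlam0 with h1 | h1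
      · nlinarith
      · exact h1
    have hmuneg : mu < 0 := by
      rcases lt_or_gt_of_ne hmu0 with h1 | h1
      · exact h1
      · nlinarith
    have ha1 : 1 < lam := by rwa [abs_of_pos hlampos] at hlam_abs
    have hb1 : 1 < -mu := by rwa [abs_of_neg hmuneg] at hmu_abs
    have hlm_pos : (0:ℝ) < lam - mu := by linarith
    have hlm_ne : lam - mu ≠ 0 := ne_of_gt hlm_pos
    have hrpos : 0 < r := by rw [hrdef]; exact inv_pos.mpr hlampos
    have hsneg : s < 0 := by rw [hsdef]; exact inv_lt_zero.mpr hmuneg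
    have hrs_ne : r - s ≠ 0 := by linarith
    have hclosed : ∀ i : ℕ, h i = r * s * (r^i - s^i) / (r - s) := by
      intro i
      induction i with
      | zero => rw [hhdef]; simp
      | succ i ih =>
        rw [hrec i, ih]
        field_simp
        ring
    have hβval : ∀ i : ℕ, β (i+1) = (r^(i+1) - s^(i+1)) / (lam - mu) := by
      intro i
      rw [(hform i).2, hclosed (i+1)]
      have hc : r * s ≠ 0 := mul_ne_zero (ne_of_gt hrpos) (ne_of_lt hsneg)
      have hkey : r - s = (mu - lam) * (r * s) := by
        rw [hrdef, hsdef]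
        field_simp
      rw [hkey, mul_comm (mu - lam) (r * s), mul_div_mul_left _ _ hc,
        show lam - mu = -(mu - lam) from by ring, div_neg]
    have hrval : r = 1/lam := by rw [hrdef, one_div]
    have hsval : s = -(1/(-mu)) := by rw [hsdef]; field_simp
    have hαrel : ∀ i : ℕ, |α (i+1)| = |(q:ℝ)| * |β (i+1+1)| := by
      intro i
      have h2 := (hstep (i+1) (by omega)).2
      have h3 : α (i+1) = -(q:ℝ) * β (i+1+1) := by
        field_simp at h2
        linarith [h2]
      rw [h3, abs_mul, abs_neg]
    have hβ1 : |β 1| = 1 / |(q:ℝ)| := by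
      rw [hbase.2, abs_neg, abs_div, abs_one]
    have hqab : |(q:ℝ)| = lam * (-mu) := by
      rw [abs_of_neg hq0R, ← hprod]; ring
    rcases le_total (-mu) lam with hba | hab
    · -- |mu| ≤ lam
      have habsβ : ∀ i : ℕ, |β (i+1)|
          = ((1/(-mu))^(i+1) - (-(1/lam))^(i+1)) / (lam - mu) := by
        intro i
        rw [hβval i, abs_div, abs_of_pos hlm_pos, hrval, hsval]
        rw [aux_abs1 lam (-mu) ha1 hb1 hba (i+1)]
      have hu : |1/(-mu)| < 1 := by
        rw [abs_of_pos (by positivity), div_lt_one (by linarith)]; linarith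
      have hw : |(-(1/lam))| < 1 := by
        rw [abs_neg, abs_of_pos (by positivity), div_lt_one (by linarith)]; linarith
      have hsummβ : Summable (fun i : ℕ => |β (i+1)|) :=
        (((aux_geom_summable _ hu).sub (aux_geom_summable _ hw)).div_const
          (lam - mu)).congr fun i => (habsβ i).symm
      have hSβ : ∑' i : ℕ, |β (i+1)|
          = ((1/(-mu))/(1-1/(-mu)) - (-(1/lam))/(1-(-(1/lam))))/(lam - mu) := by
        rw [tsum_congr habsβ, tsum_div_const,
          Summable.tsum_sub (aux_geom_summable _ hu) (aux_geom_summable _ hw),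
          aux_geom_tsum _ hu, aux_geom_tsum _ hw]
      have hpabs : |(p:ℝ)| = lam + mu := by
        have h5 : ((p:ℤ):ℝ) = -(lam + mu) := by linarith [hsum]
        rw [h5, abs_neg, abs_of_nonneg (by linarith)]
      have hden : |(q:ℝ)| - |(p:ℝ)| - 1 = ((-mu) - 1) * (lam + 1) := by
        rw [hqab, hpabs]; ring
      have hαsum := aux_alpha |(q:ℝ)| (fun i => |β (i+1)|) (fun i => |α (i+1)|)
        hsummβ hαrel (abs_ne_zero.mpr hq') hβ1
      have h1 : (-mu) - 1 ≠ 0 := by linarith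
      have h2 : lam + 1 ≠ 0 := by linarith
      constructor
      · rw [hαsum, hSβ, aux_frac1 (-mu) hb1, aux_frac2 lam ha1, hden, hqab, hpabs]
        field_simp
        ring
      · rw [hSβ, aux_frac1 (-mu) hb1, aux_frac2 lam ha1, hden]
        field_simp
        ring
    · -- lam ≤ |mu|
      have habsβ : ∀ i : ℕ, |β (i+1)|
          = ((1/lam)^(i+1) - (-(1/(-mu)))^(i+1)) / (lam - mu) := by
        intro i
        rw [hβval i, abs_div, abs_of_pos hlm_pos, hrval, hsval]
        rw [aux_abs2 lam (-mu) ha1 hb1 hab (i+1)]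
      have hu : |1/lam| < 1 := by
        rw [abs_of_pos (by positivity), div_lt_one (by linarith)]; linarith
      have hw : |(-(1/(-mu)))| < 1 := by
        rw [abs_neg, abs_of_pos (by positivity), div_lt_one (by linarith)]; linarith
      have hsummβ : Summable (fun i : ℕ => |β (i+1)|) :=
        (((aux_geom_summable _ hu).sub (aux_geom_summable _ hw)).div_const
          (lam - mu)).congr fun i => (habsβ i).symm
      have hSβ : ∑' i : ℕ, |β (i+1)|
          = ((1/lam)/(1-1/lam) - (-(1/(-mu)))/(1-(-(1/(-mu)))))/(lam - mu) := by
        rw [tsum_congr habsβ, tsum_div_const,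
          Summable.tsum_sub (aux_geom_summable _ hu) (aux_geom_summable _ hw),
          aux_geom_tsum _ hu, aux_geom_tsum _ hw]
      have hpabs : |(p:ℝ)| = -(lam + mu) := by
        have h5 : ((p:ℤ):ℝ) = -(lam + mu) := by linarith [hsum]
        rw [h5, abs_neg, abs_of_nonpos (by linarith)]
      have hden : |(q:ℝ)| - |(p:ℝ)| - 1 = (lam - 1) * ((-mu) + 1) := by
        rw [hqab, hpabs]; ring
      have hαsum := aux_alpha |(q:ℝ)| (fun i => |β (i+1)|) (fun i => |α (i+1)|)
        hsummβ hαrel (abs_ne_zero.mpr hq') hβ1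
      have h1 : lam - 1 ≠ 0 := by linarith
      have h2 : (-mu) + 1 ≠ 0 := by linarith
      constructor
      · rw [hαsum, hSβ, aux_frac1 lam ha1, aux_frac2 (-mu) hb1, hden, hqab, hpabs]
        field_simp
        ring
      · rw [hSβ, aux_frac1 lam ha1, aux_frac2 (-mu) hb1, hden]
        field_simp
        ring
end
end

section
/- Let A be a 2×2 expanding integer matrix with characteristic polynomial f(x) = x² + px + q and Δ = p² − 4q < 0 (so q > 0), and let v ∈ ℤ² be such that {v, Av} is linearly independent over ℝ. Define α_i, β_i by A^{−i}v = α_i v + β_i Av. Then for all i ≥ 1, |α_i| ≤ 2q^{−(i−1)/2}/(4q − p²)^{1/2} and |β_i| ≤ 2q^{−i/2}/(4q − p²)^{1/2}. -/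
open Matrix Polynomial Pointwise

noncomputable section

set_option maxHeartbeats 1000000 in
/-- bounds on `|α_i|` and `|β_i|` when `Δ = p² - 4q < 0` (so `q > 0`). -/
theorem stmt7 (A : Matrix (Fin 2) (Fin 2) ℤ) (p q : ℤ)
    (hA : IsExpanding A)
    (hchar : A.charpoly = X ^ 2 + C p * X + C q)
    (hΔ : p ^ 2 - 4 * q < 0)
    (v : Fin 2 → ℤ)
    (hv : LinearIndependent ℝ ![vecR v, (toR A).mulVec (vecR v)])
    (α β : ℕ → ℝ)
    (hαβ : ∀ i : ℕ, 1 ≤ i →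
      ((toR A)⁻¹ ^ i).mulVec (vecR v) = α i • vecR v + β i • (toR A).mulVec (vecR v)) :
    ∀ i : ℕ, 1 ≤ i →
      |α i| ≤ 2 * (q : ℝ) ^ (-(((i : ℝ) - 1)) / 2) / Real.sqrt (4 * (q : ℝ) - (p : ℝ) ^ 2) ∧
      |β i| ≤ 2 * (q : ℝ) ^ (-(i : ℝ) / 2) / Real.sqrt (4 * (q : ℝ) - (p : ℝ) ^ 2) := by
  intro i hi
  set B := toR A with hBdef
  set u := vecR v with hudef
  set w := B.mulVec u with hwdef
  -- basic positivity
  have hΔ' : (p:ℝ) ^ 2 - 4 * (q:ℝ) < 0 := by exact_mod_cast hΔ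
  have hq4 : (0:ℝ) < 4 * (q:ℝ) - (p:ℝ) ^ 2 := by linarith
  have hq : (0:ℝ) < (q:ℝ) := by nlinarith [sq_nonneg (p:ℝ)]
  have hqne : (q:ℝ) ≠ 0 := ne_of_gt hq
  -- Cayley–Hamilton over ℝ
  have hCH : B ^ 2 + (p:ℝ) • B + (q:ℝ) • 1 = 0 := by
    have hc : B.charpoly = X ^ 2 + C (p:ℝ) * X + C (q:ℝ) := by
      have := Matrix.charpoly_map A (Int.castRingHom ℝ)
      rw [hchar] at this
      rw [hBdef, toR]
      simpa [Polynomial.map_add, Polynomial.map_pow, Polynomial.map_mul] using this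
    have h := Matrix.aeval_self_charpoly B
    rw [hc] at h
    simp only [map_add, map_pow, _root_.map_mul, aeval_X, aeval_C,
      Algebra.algebraMap_eq_smul_one, smul_mul_assoc, one_mul] at h
    exact h
  -- explicit inverse
  set Minv : Matrix (Fin 2) (Fin 2) ℝ := (-(q:ℝ)⁻¹) • (B + (p:ℝ) • 1) with hM
  have hinv1 : B * Minv = 1 := by
    have h1 : B ^ 2 + (p:ℝ) • B = -((q:ℝ) • 1) := by
      rw [← sub_eq_zero]; rw [← hCH]; abel
    rw [hM, mul_smul_comm, mul_add, mul_smul_comm, mul_one, ← pow_two, h1]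
    rw [smul_neg, smul_smul, neg_mul, neg_smul, neg_neg, inv_mul_cancel₀ hqne, one_smul]
  have hBinv : B⁻¹ = Minv := Matrix.inv_eq_right_inv hinv1
  have hinvB : B⁻¹ * B = 1 := by rw [hBinv]; exact mul_eq_one_comm.mp hinv1
  -- coefficient uniqueness
  have huni : ∀ a b c d : ℝ, a • u + b • w = c • u + d • w → a = c ∧ b = d := by
    intro a b c d h
    have h0 : (a - c) • u + (b - d) • w = 0 := by
      rw [sub_smul, sub_smul,
        show a • u - c • u + (b • w - d • w) = (a • u + b • w) - (c • u + d • w) by abel,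
        h, sub_self]
    have hli := Fintype.linearIndependent_iff.mp hv ![a - c, b - d] (by
      simpa [Fin.sum_univ_two] using h0)
    have h1 := hli 0
    have h2 := hli 1
    simp at h1 h2
    constructor <;> linarith
  -- value of α 1, β 1
  have h1 := hαβ 1 le_rfl
  rw [pow_one, hBinv] at h1
  have hMv : Minv.mulVec u = (-(p:ℝ)/(q:ℝ)) • u + (-(q:ℝ)⁻¹) • w := by
    rw [hM, Matrix.smul_mulVec, Matrix.add_mulVec, Matrix.smul_mulVec,
      Matrix.one_mulVec, ← hwdef]
    rw [smul_add, smul_smul]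
    rw [add_comm]
    congr 1
    rw [show -(q:ℝ)⁻¹ * (p:ℝ) = -(p:ℝ)/(q:ℝ) by ring]
  obtain ⟨hα1, hβ1⟩ := huni _ _ _ _ (h1.symm.trans hMv)
  -- recurrence
  have hrec : ∀ j, 1 ≤ j → α (j+1) = α j * α 1 + β j ∧ β (j+1) = α j * β 1 := by
    intro j hj
    have hj1 := hαβ j hj
    have hj2 := hαβ (j+1) (by omega)
    have h1' := hαβ 1 le_rfl
    rw [pow_one] at h1'
    have hWinv : B⁻¹.mulVec w = u := by
      rw [hwdef, Matrix.mulVec_mulVec, hinvB, Matrix.one_mulVec]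
    have hcomp : (B⁻¹ ^ (j+1)).mulVec u = (α j * α 1 + β j) • u + (α j * β 1) • w := by
      rw [pow_succ', ← Matrix.mulVec_mulVec, hj1, Matrix.mulVec_add, Matrix.mulVec_smul,
        Matrix.mulVec_smul, hWinv, h1']
      rw [smul_add, smul_smul, smul_smul, add_smul]
      abel
    exact huni _ _ _ _ (hj2.symm.trans hcomp)
  -- the complex eigenvalue
  set b : ℝ := Real.sqrt (4 * (q:ℝ) - (p:ℝ) ^ 2) / 2 with hbdef
  have hb : 0 < b := by
    rw [hbdef]; positivity
  have hb2 : b ^ 2 = (4 * (q:ℝ) - (p:ℝ) ^ 2) / 4 := by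
    rw [hbdef, div_pow, Real.sq_sqrt hq4.le]; norm_num
  set L : ℂ := ⟨-(p:ℝ)/2, b⟩ with hL
  have hLre : L.re = -(p:ℝ)/2 := rfl
  have hLim : L.im = b := rfl
  have hL2 : L ^ 2 = -((p:ℤ):ℂ) * L - ((q:ℤ):ℂ) := by
    apply Complex.ext
    · simp [pow_two, Complex.mul_re, hLre, hLim]
      nlinarith [hb2]
    · simp [pow_two, Complex.mul_im, hLre, hLim]
      ring
  set z : ℕ → ℂ := fun j => ((α j : ℝ) : ℂ) + ((β j : ℝ) : ℂ) * L with hz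
  have hqZ : (q:ℤ) ≠ 0 := by exact_mod_cast hqne
  have hq0 : ((q:ℤ):ℂ) ≠ 0 := Int.cast_ne_zero.mpr hqZ
  have hz1 : L * z 1 = 1 := by
    rw [hz]
    simp only [hα1, hβ1]
    push_cast
    field_simp
    linear_combination (-1:ℂ) * hL2
  have hzrec : ∀ j, 1 ≤ j → L * z (j+1) = z j := by
    intro j hj
    obtain ⟨ha, hb'⟩ := hrec j hj
    rw [hz]
    simp only [ha, hb']
    push_cast
    have hz1' : L * (((α 1 : ℝ):ℂ) + ((β 1 : ℝ):ℂ) * L) = 1 := hz1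
    linear_combination ((α j : ℝ):ℂ) * hz1'
  -- absolute values
  have hnormL : Complex.normSq L = (q:ℝ) := by
    simp [Complex.normSq_apply, hLre, hLim]
    nlinarith [hb2]
  set s : ℝ := Real.sqrt (q:ℝ) with hs
  have hspos : 0 < s := Real.sqrt_pos.mpr hq
  have habsL : ‖L‖ = s := by
    rw [Complex.norm_def, hnormL]
  have habsz : ∀ j, 1 ≤ j → ‖z j‖ = (s ^ j)⁻¹ := by
    have key : ∀ j, 1 ≤ j → ‖z j‖ * s ^ j = 1 := by
      intro j hj
      induction j, hj using Nat.le_induction with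
      | base =>
        have h := congrArg (‖·‖) hz1
        rw [norm_mul, habsL, norm_one] at h
        rw [pow_one, mul_comm]; exact h
      | succ n hn ih =>
        have := congrArg (‖·‖) (hzrec n hn)
        rw [norm_mul, habsL] at this
        calc ‖z (n+1)‖ * s ^ (n+1)
            = (s * ‖z (n+1)‖) * s ^ n := by ring
          _ = ‖z n‖ * s ^ n := by rw [this]
          _ = 1 := ih
    intro j hj
    have h := key j hj
    have hne : s ^ j ≠ 0 := by positivity
    field_simp
    linarith [h]
  -- imaginary part computations
  have him : (z i).im = β i * b := by
    rw [hz]; simp [Complex.add_im, Complex.mul_im, hLre, hLim]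
  set Lb : ℂ := ⟨-(p:ℝ)/2, -b⟩ with hLb
  have hnormLb : Complex.normSq Lb = (q:ℝ) := by
    simp [Complex.normSq_apply, hLb]
    nlinarith [hb2]
  have habsLb : ‖Lb‖ = s := by
    rw [Complex.norm_def, hnormLb]
  have him2 : (Lb * z i).im = -(b * α i) := by
    rw [hz]
    simp [Complex.mul_im, Complex.add_im, Complex.add_re, Complex.mul_re, hLb, hLre, hLim]
    ring
  have habszi : ‖z i‖ = (s ^ i)⁻¹ := habsz i hi
  -- the two bounds
  have hβbound : |β i| * b ≤ (s ^ i)⁻¹ := by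
    have := Complex.abs_im_le_norm (z i)
    rw [him, habszi] at this
    rwa [abs_mul, abs_of_pos hb] at this
  have hαbound : |α i| * b ≤ s * (s ^ i)⁻¹ := by
    have h1 := Complex.abs_im_le_norm (Lb * z i)
    rw [him2, norm_mul, habsLb, habszi, abs_neg, abs_mul, abs_of_pos hb, mul_comm b |α i|] at h1
    exact h1
  -- rpow conversions
  have hsq : (q:ℝ) ^ ((1:ℝ)/2) = s := (Real.sqrt_eq_rpow (q:ℝ)).symm
  have hrp1 : (q:ℝ) ^ (-(i:ℝ)/2) = (s ^ i)⁻¹ := by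
    rw [show -(i:ℝ)/2 = ((1:ℝ)/2) * (-(i:ℝ)) by ring, Real.rpow_mul hq.le, hsq,
      Real.rpow_neg hspos.le, Real.rpow_natCast]
  have hrp2 : (q:ℝ) ^ (-((i:ℝ)-1)/2) = s * (s ^ i)⁻¹ := by
    rw [show -((i:ℝ)-1)/2 = (1:ℝ)/2 + (-(i:ℝ)/2) by ring, Real.rpow_add hq, hsq, hrp1]
  have hsrt : Real.sqrt (4 * (q:ℝ) - (p:ℝ) ^ 2) = 2 * b := by rw [hbdef]; ring
  constructor
  · rw [hrp2, hsrt, show 2 * (s * (s ^ i)⁻¹) / (2 * b) = (s * (s ^ i)⁻¹) / b by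
      field_simp]
    rw [le_div_iff₀ hb]
    exact hαbound
  · rw [hrp1, hsrt, show 2 * (s ^ i)⁻¹ / (2 * b) = (s ^ i)⁻¹ / b by field_simp]
    rw [le_div_iff₀ hb]
    exact hβbound
end
end

section
/- Let A be a 2×2 expanding integer matrix with characteristic polynomial f(x) = x² + px + q where |q| − |p| − 1 > 0, and let v ∈ ℤ² be such that {v, Av} is linearly independent over ℝ. Define α_i, β_i by A^{−i}v = α_i v + β_i Av, and set α̃ = ∑_{i=1}^∞ |α_i|, β̃ = ∑_{i=1}^∞ |β_i|. Then (|q| − |p| − 1)·β̃ ≤ 1, and (|q| − |p| − 1)·α̃ ≤ (|q| − |p|)·|p|/|q| + |p² − q|/|q|; in particular, when q > 0 and p ≥ 1, α̃ ≤ (p − 1)/(q − p − 1) if p² ≥ q, and α̃ ≤ (qp − 2p² + q)/(q(q − p − 1)) if p² < q. -/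
open Matrix Polynomial Pointwise

noncomputable section

/-- Summability and sum bound for sequences satisfying the recurrence bound. -/
lemma aux_rec (P Q : ℝ) (hP : 0 ≤ P) (hPQ : P + 1 < Q)
    (g : ℕ → ℝ)
    (hrec : ∀ i, 1 ≤ i → Q * |g (i + 2)| ≤ P * |g (i + 1)| + |g i|) :
    Summable (fun i => |g (i + 1)|) ∧
    (Q - P - 1) * (∑' i, |g (i + 1)|) ≤ (Q - P) * |g 1| + Q * |g 2| := by
  have hQ0 : 0 < Q := by linarith
  set r : ℝ := (P + 1) / Q with hr
  have hr0 : 0 < r := div_pos (by linarith) hQ0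
  have hr1 : r < 1 := (div_lt_one hQ0).mpr (by linarith)
  set s : ℝ := Real.sqrt r with hs
  have hs0 : 0 < s := Real.sqrt_pos.mpr hr0
  have hs1 : s < 1 := by
    have := Real.sqrt_lt_sqrt hr0.le hr1
    simpa using this
  have hs2 : s ^ 2 = r := by
    rw [sq]; exact Real.mul_self_sqrt hr0.le
  set K : ℝ := max |g 1| |g 2| / s ^ 2 with hK
  have hK0 : 0 ≤ K := div_nonneg (le_max_iff.2 (Or.inl (abs_nonneg _))) (by positivity)
  have key : ∀ n : ℕ, |g (n + 1)| ≤ K * s ^ (n + 1) ∧ |g (n + 2)| ≤ K * s ^ (n + 2) := by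
    intro n
    induction n with
    | zero =>
      constructor
      · have h1 : |g 1| ≤ max |g 1| |g 2| := le_max_left _ _
        have : K * s ^ 1 = max |g 1| |g 2| / s := by
          rw [hK, pow_one, pow_two, ← div_div, div_mul_cancel₀ _ hs0.ne']
        rw [this]
        calc |g 1| ≤ max |g 1| |g 2| := h1
          _ ≤ max |g 1| |g 2| / s := by
            rw [le_div_iff₀ hs0]
            nlinarith [abs_nonneg (g 1), le_max_left |g 1| |g 2|]
      · have : K * s ^ 2 = max |g 1| |g 2| := by
          rw [hK, div_mul_cancel₀ _ (pow_ne_zero 2 hs0.ne')]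
        rw [this]; exact le_max_right _ _
    | succ n ih =>
      refine ⟨ih.2, ?_⟩
      have h3 := hrec (n + 1) (by omega)
      have hPs : P * s + 1 ≤ Q * s ^ 2 := by
        have : Q * s ^ 2 = P + 1 := by
          rw [hs2, hr]; field_simp
        nlinarith
      have : Q * |g (n + 3)| ≤ K * s ^ (n + 1) * (Q * s ^ 2) := by
        calc Q * |g (n + 3)| ≤ P * |g (n + 2)| + |g (n + 1)| := h3
          _ ≤ P * (K * s ^ (n + 2)) + K * s ^ (n + 1) := by
              nlinarith [ih.1, ih.2]
          _ = K * s ^ (n + 1) * (P * s + 1) := by ring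
          _ ≤ K * s ^ (n + 1) * (Q * s ^ 2) := by
              have : 0 ≤ K * s ^ (n + 1) := by positivity
              nlinarith
      have hgoal : |g (n + 3)| ≤ K * s ^ (n + 3) := by
        have h4 : K * s ^ (n + 1) * (Q * s ^ 2) = Q * (K * s ^ (n + 3)) := by ring
        rw [h4] at this
        exact le_of_mul_le_mul_left this hQ0
      exact hgoal
  have hbound : ∀ n : ℕ, |g (n + 1)| ≤ (K * s) * s ^ n := fun n => by
    have := (key n).1
    calc |g (n + 1)| ≤ K * s ^ (n + 1) := this
      _ = (K * s) * s ^ n := by ring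
  have hsum : Summable (fun i => |g (i + 1)|) := by
    apply Summable.of_nonneg_of_le (fun n => abs_nonneg _) hbound
    exact (summable_geometric_of_lt_one hs0.le hs1).mul_left _
  refine ⟨hsum, ?_⟩
  set S := ∑' i, |g (i + 1)| with hS
  have hsum2 : Summable (fun i => |g (i + 2)|) := by
    have := (summable_nat_add_iff 1).mpr hsum
    simpa [add_assoc] using this
  have hsum3 : Summable (fun i => |g (i + 3)|) := by
    have := (summable_nat_add_iff 2).mpr hsum
    simpa [add_assoc] using this
  have e1 : S = |g 1| + ∑' i, |g (i + 2)| := by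
    rw [hS, Summable.tsum_eq_zero_add hsum]
  have e2 : (∑' i, |g (i + 2)|) = |g 2| + ∑' i, |g (i + 3)| := by
    rw [Summable.tsum_eq_zero_add hsum2]
  have e3 : Q * (∑' i, |g (i + 3)|) ≤ P * (∑' i, |g (i + 2)|) + S := by
    rw [← tsum_mul_left, ← tsum_mul_left]
    have := Summable.tsum_add (hsum2.mul_left P) hsum
    rw [← this]
    apply Summable.tsum_le_tsum _ (hsum3.mul_left Q) ((hsum2.mul_left P).add hsum)
    intro i
    exact hrec (i + 1) (by omega)
  have h2 : (∑' i, |g (i + 3)|) = S - |g 1| - |g 2| := by linarith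
  have h3 : (∑' i, |g (i + 2)|) = S - |g 1| := by linarith
  rw [h2, h3] at e3
  nlinarith [e3]

set_option maxHeartbeats 1000000 in
/-- general bounds `(|q|-|p|-1)β̃ ≤ 1` and
`(|q|-|p|-1)α̃ ≤ (|q|-|p|)|p|/|q| + |p²-q|/|q|`, together with the particular
bounds for `q > 0`, `p ≥ 1`. -/
theorem stmt8 (A : Matrix (Fin 2) (Fin 2) ℤ) (p q : ℤ)
    (hA : IsExpanding A)
    (hchar : A.charpoly = X ^ 2 + C p * X + C q)
    (hpq : 0 < |q| - |p| - 1)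
    (v : Fin 2 → ℤ)
    (hv : LinearIndependent ℝ ![vecR v, (toR A).mulVec (vecR v)])
    (α β : ℕ → ℝ)
    (hαβ : ∀ i : ℕ, 1 ≤ i →
      ((toR A)⁻¹ ^ i).mulVec (vecR v) = α i • vecR v + β i • (toR A).mulVec (vecR v)) :
    ((|q| : ℝ) - (|p| : ℝ) - 1) * (∑' i : ℕ, |β (i + 1)|) ≤ 1 ∧
    ((|q| : ℝ) - (|p| : ℝ) - 1) * (∑' i : ℕ, |α (i + 1)|) ≤
      ((|q| : ℝ) - (|p| : ℝ)) * (|p| : ℝ) / (|q| : ℝ) +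
        (|p ^ 2 - q| : ℝ) / (|q| : ℝ) ∧
    (0 < q → 1 ≤ p → q ≤ p ^ 2 →
      (∑' i : ℕ, |α (i + 1)|) ≤ ((p : ℝ) - 1) / ((q : ℝ) - (p : ℝ) - 1)) ∧
    (0 < q → 1 ≤ p → p ^ 2 < q →
      (∑' i : ℕ, |α (i + 1)|) ≤
        ((q : ℝ) * (p : ℝ) - 2 * (p : ℝ) ^ 2 + (q : ℝ)) /
          ((q : ℝ) * ((q : ℝ) - (p : ℝ) - 1))) := by
  have habs : 0 ≤ |p| := abs_nonneg p
  have hq0 : (q:ℝ) ≠ 0 := by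
    have h1 : (0:ℤ) < |q| := by linarith
    have : q ≠ 0 := by
      intro h; rw [h] at h1; simp at h1
    exact_mod_cast this
  set B := toR A with hBdef
  set w := vecR v with hwdef
  set u := B.mulVec w with hudef
  -- Cayley-Hamilton over ℝ
  have hCH : B * B + (p:ℝ) • B + (q:ℝ) • 1 = 0 := by
    have h0 := Matrix.aeval_self_charpoly A
    rw [hchar] at h0
    simp only [map_add, _root_.map_mul, map_pow, aeval_X, aeval_C, algebraMap_int_eq,
      eq_intCast] at h0
    have h1 := congrArg (fun M => (Int.castRingHom ℝ).mapMatrix M) h0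
    simp only [map_add, _root_.map_mul, map_pow, map_zero, map_intCast,
      RingHom.mapMatrix_apply] at h1
    have h2 : ((p : ℤ) : Matrix (Fin 2) (Fin 2) ℝ) = (p : ℝ) • 1 := by
      rw [Int.cast_smul_eq_zsmul ℝ p (1 : Matrix (Fin 2) (Fin 2) ℝ), zsmul_eq_mul, mul_one]
    have h3 : ((q : ℤ) : Matrix (Fin 2) (Fin 2) ℝ) = (q : ℝ) • 1 := by
      rw [Int.cast_smul_eq_zsmul ℝ q (1 : Matrix (Fin 2) (Fin 2) ℝ), zsmul_eq_mul, mul_one]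
    rw [h2, h3] at h1
    rw [sq] at h1
    simpa [hBdef, toR, smul_mul_assoc] using h1
  -- explicit inverse
  set Cm : Matrix (Fin 2) (Fin 2) ℝ := (-(1:ℝ)/q) • (B + (p:ℝ) • 1) with hCm
  have hBC : B * Cm = 1 := by
    rw [hCm, Matrix.mul_smul, Matrix.mul_add, Matrix.mul_smul, mul_one]
    have h4 : B * B + (p:ℝ) • B = -((q:ℝ) • 1) := by
      linear_combination (norm := abel) hCH
    rw [h4, smul_neg, smul_smul]
    have : (-1 / (q:ℝ)) * q = -1 := by field_simp
    rw [this]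
    simp
  have hCB : Cm * B = 1 := mul_eq_one_comm.mp hBC
  have hBinv : B⁻¹ = Cm := Matrix.inv_eq_right_inv hBC
  -- uniqueness of coefficients
  have huniq : ∀ a b c d : ℝ, a • w + b • u = c • w + d • u → a = c ∧ b = d := by
    intro a b c d h
    have hz : (a - c) • w + (b - d) • u = 0 := by
      have h' : a • w + b • u - (c • w + d • u) = 0 := sub_eq_zero.mpr h
      calc (a - c) • w + (b - d) • u = a • w + b • u - (c • w + d • u) := by module
        _ = 0 := h'
    obtain ⟨h5, h6⟩ := LinearIndependent.pair_iff.mp hv _ _ hz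
    exact ⟨sub_eq_zero.mp h5, sub_eq_zero.mp h6⟩
  -- first coefficients
  have hcw : Cm.mulVec w = (-((p:ℝ)/q)) • w + (-(1/(q:ℝ))) • u := by
    rw [hCm, Matrix.smul_mulVec, Matrix.add_mulVec, Matrix.smul_mulVec,
      Matrix.one_mulVec, ← hudef]
    module
  have e1 := hαβ 1 le_rfl
  rw [pow_one, hBinv, hcw] at e1
  obtain ⟨hα1, hβ1⟩ := huniq _ _ _ _ e1
  have hα1' : α 1 = -((p:ℝ)/q) := hα1.symm
  have hβ1' : β 1 = -(1/(q:ℝ)) := hβ1.symm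
  -- recurrence step
  have hstep : ∀ i, 1 ≤ i →
      α (i+1) = α i * (-((p:ℝ)/q)) + β i ∧ β (i+1) = α i * (-(1/(q:ℝ))) := by
    intro i hi
    have ei := hαβ i hi
    have ei1 := hαβ (i+1) (by omega)
    have hBw : B⁻¹ *ᵥ w = (-((p:ℝ)/q)) • w + (-(1/(q:ℝ))) • u := by rw [hBinv]; exact hcw
    have hBu : B⁻¹ *ᵥ u = w := by
      rw [hudef, Matrix.mulVec_mulVec, hBinv, hCB, Matrix.one_mulVec]
    have key : (B⁻¹ ^ (i+1)) *ᵥ w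
        = (α i * (-((p:ℝ)/q)) + β i) • w + (α i * (-(1/(q:ℝ)))) • u := by
      rw [pow_succ', ← Matrix.mulVec_mulVec, ei, Matrix.mulVec_add, Matrix.mulVec_smul,
        Matrix.mulVec_smul, hBw, hBu]
      module
    rw [key] at ei1
    obtain ⟨h5, h6⟩ := huniq _ _ _ _ ei1
    exact ⟨h5.symm, h6.symm⟩
  -- second coefficients
  have hα2 : α 2 = ((p:ℝ)^2 - q)/q^2 := by
    have h := (hstep 1 le_rfl).1
    rw [hα1', hβ1'] at h
    rw [h]; field_simp; ring
  have hβ2 : β 2 = (p:ℝ)/q^2 := by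
    have h := (hstep 1 le_rfl).2
    rw [hα1'] at h
    rw [h, neg_mul_neg, div_mul_div_comm, mul_one, pow_two]
  -- linear recurrences
  have hrecα : ∀ i, 1 ≤ i → (q:ℝ) * α (i+2) + p * α (i+1) + α i = 0 := by
    intro i hi
    obtain ⟨h1, -⟩ := hstep (i+1) (by omega)
    obtain ⟨-, h2⟩ := hstep i hi
    simp only [show i+1+1 = i+2 from rfl] at h1
    rw [h1, h2]; field_simp; ring
  have hrecβ : ∀ i, 1 ≤ i → (q:ℝ) * β (i+2) + p * β (i+1) + β i = 0 := by
    intro i hi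
    obtain ⟨h1, h3⟩ := hstep (i+1) (by omega)
    obtain ⟨h4, h2⟩ := hstep i hi
    simp only [show i+1+1 = i+2 from rfl] at h1 h3
    rw [h3, h4, h2]; field_simp; ring
  -- absolute-value recurrences
  have hrecabs : ∀ (g : ℕ → ℝ), (∀ i, 1 ≤ i → (q:ℝ) * g (i+2) + p * g (i+1) + g i = 0) →
      ∀ i, 1 ≤ i → |(q:ℝ)| * |g (i+2)| ≤ |(p:ℝ)| * |g (i+1)| + |g i| := by
    intro g hg i hi
    have h := hg i hi
    have h' : (q:ℝ) * g (i+2) = -((p:ℝ) * g (i+1)) - g i := by linarith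
    calc |(q:ℝ)| * |g (i+2)| = |(q:ℝ) * g (i+2)| := (abs_mul _ _).symm
      _ = |(-((p:ℝ) * g (i+1))) - g i| := by rw [h']
      _ ≤ |(-((p:ℝ) * g (i+1)))| + |g i| := abs_sub _ _
      _ = |(p:ℝ)| * |g (i+1)| + |g i| := by rw [abs_neg, abs_mul]
  have hPQ : |(p:ℝ)| + 1 < |(q:ℝ)| := by
    have h : (|p| : ℤ) + 1 < |q| := by omega
    exact_mod_cast h
  have hQ0 : (0:ℝ) < |(q:ℝ)| := by
    have := abs_nonneg (p:ℝ); linarith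
  obtain ⟨hsumα, hbα⟩ := aux_rec |(p:ℝ)| |(q:ℝ)| (abs_nonneg _) hPQ α (hrecabs α hrecα)
  obtain ⟨hsumβ, hbβ⟩ := aux_rec |(p:ℝ)| |(q:ℝ)| (abs_nonneg _) hPQ β (hrecabs β hrecβ)
  -- absolute values of first coefficients
  have haα1 : |α 1| = |(p:ℝ)| / |(q:ℝ)| := by
    rw [hα1', abs_neg, abs_div]
  have haβ1 : |β 1| = 1 / |(q:ℝ)| := by
    rw [hβ1', abs_neg, abs_div, abs_one]
  have haα2 : |α 2| = |(p:ℝ)^2 - q| / |(q:ℝ)|^2 := by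
    rw [hα2, abs_div, abs_pow]
  have haβ2 : |β 2| = |(p:ℝ)| / |(q:ℝ)|^2 := by
    rw [hβ2, abs_div, abs_pow]
  -- goal 2 in real form
  have G2 : (|(q:ℝ)| - |(p:ℝ)| - 1) * (∑' i : ℕ, |α (i + 1)|) ≤
      (|(q:ℝ)| - |(p:ℝ)|) * |(p:ℝ)| / |(q:ℝ)| + |(p:ℝ)^2 - (q:ℝ)| / |(q:ℝ)| := by
    rw [haα1, haα2] at hbα
    have hx : |(q:ℝ)| * (|(p:ℝ)^2 - (q:ℝ)| / |(q:ℝ)|^2) = |(p:ℝ)^2 - (q:ℝ)| / |(q:ℝ)| := by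
      rw [pow_two |(q:ℝ)|, ← div_div, mul_div_cancel₀ _ (ne_of_gt hQ0)]
    rw [hx, ← mul_div_assoc] at hbα
    exact hbα
  refine ⟨?_, ?_, ?_, ?_⟩
  · -- goal 1
    rw [haβ1, haβ2] at hbβ
    have hx : |(q:ℝ)| * (|(p:ℝ)| / |(q:ℝ)|^2) = |(p:ℝ)| / |(q:ℝ)| := by
      rw [pow_two |(q:ℝ)|, ← div_div, mul_div_cancel₀ _ (ne_of_gt hQ0)]
    rw [hx, mul_one_div] at hbβ
    have he : (|(q:ℝ)| - |(p:ℝ)|) / |(q:ℝ)| + |(p:ℝ)| / |(q:ℝ)| = 1 := by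
      rw [← add_div]
      rw [div_eq_one_iff_eq (ne_of_gt hQ0)]
      ring
    linarith
  · exact G2
  · intro hq hp hle
    have hq' : (0:ℝ) < q := by exact_mod_cast hq
    have hp' : (1:ℝ) ≤ p := by exact_mod_cast hp
    have hle' : (q:ℝ) ≤ (p:ℝ)^2 := by exact_mod_cast hle
    have hQq : |(q:ℝ)| = q := abs_of_pos hq'
    have hPp : |(p:ℝ)| = p := abs_of_pos (by linarith)
    have hd : (0:ℝ) < (q:ℝ) - p - 1 := by
      rw [hQq, hPp] at hPQ; linarith
    rw [hQq, hPp, abs_of_nonneg (by linarith : (0:ℝ) ≤ (p:ℝ)^2 - q)] at G2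
    rw [le_div_iff₀ hd]
    have he : ((q:ℝ)-p)*p/q + ((p:ℝ)^2-q)/q = (p:ℝ) - 1 := by
      field_simp; ring
    linarith [G2, he.le, he.ge]
  · intro hq hp hlt
    have hq' : (0:ℝ) < q := by exact_mod_cast hq
    have hp' : (1:ℝ) ≤ p := by exact_mod_cast hp
    have hlt' : (p:ℝ)^2 < (q:ℝ) := by exact_mod_cast hlt
    have hQq : |(q:ℝ)| = q := abs_of_pos hq'
    have hPp : |(p:ℝ)| = p := abs_of_pos (by linarith)
    have hd : (0:ℝ) < (q:ℝ) - p - 1 := by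
      rw [hQq, hPp] at hPQ; linarith
    rw [hQq, hPp, abs_of_neg (by linarith : (p:ℝ)^2 - q < 0)] at G2
    rw [le_div_iff₀ (mul_pos hq' hd)]
    have hmul := mul_le_mul_of_nonneg_left G2 hq'.le
    have he : (q:ℝ) * (((q:ℝ)-p)*p/q + (-((p:ℝ)^2 - q))/q) = (q:ℝ)*p - 2*p^2 + q := by
      field_simp; ring
    linarith [hmul, he.le, he.ge]
end
end

section
/- Let A be a 2×2 expanding integer matrix, let v ∈ ℤ² be such that {v, Av} is linearly independent over ℝ, let D ⊂ ℤ be a finite digit set, and set T₁ = T(A, Dv) and T₂ = T(−A, Dv). Then for every l ∈ ℝ², l ∈ T₁ − T₁ if and only if l ∈ T₂ − T₂; consequently T₁ is connected if and only if T₂ is connected. -/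
open Matrix Polynomial Pointwise

noncomputable section

-- quadratic roots over ℂ
lemma exists_quad_roots (c d : ℂ) : ∃ μ₁ μ₂ : ℂ, μ₁ + μ₂ = c ∧ μ₁ * μ₂ = d := by
  obtain ⟨z, hz⟩ := IsAlgClosed.exists_root (X ^ 2 - C c * X + C d) (by
    have : (X ^ 2 - C c * X + C d).degree = 2 := by
      compute_degree!
    simp [this])
  refine ⟨z, c - z, by ring, ?_⟩
  have : z ^ 2 - c * z + d = 0 := by simpa [Polynomial.IsRoot] using hz
  ring_nf
  linear_combination -this

-- Cayley–Hamilton for 2×2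
lemma sq_eq (M : Matrix (Fin 2) (Fin 2) ℝ) :
    M ^ 2 = M.trace • M - M.det • (1 : Matrix (Fin 2) (Fin 2) ℝ) := by
  ext i j
  fin_cases i <;> fin_cases j <;>
    simp [pow_two, Matrix.mul_apply, Fin.sum_univ_two, Matrix.trace_fin_two,
      Matrix.det_fin_two, Matrix.one_apply] <;> ring

lemma recur_closed (a : ℕ → ℂ) (μ₁ μ₂ : ℂ)
    (hrec : ∀ n, a (n+2) = (μ₁ + μ₂) * a (n+1) - (μ₁ * μ₂) * a n) :
    ∀ n, a (n+1) = μ₁ * a n + μ₂ ^ n * (a 1 - μ₁ * a 0) := by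
  intro n
  induction n with
  | zero => ring
  | succ n ih =>
    have h := hrec n
    rw [h, ih]; ring

lemma recur_bound (a : ℕ → ℂ) (μ₁ μ₂ : ℂ) (ρ : ℝ) (hρ : 0 < ρ)
    (h1 : ‖μ₁‖ ≤ ρ) (h2 : ‖μ₂‖ ≤ ρ)
    (hrec : ∀ n, a (n+2) = (μ₁ + μ₂) * a (n+1) - (μ₁ * μ₂) * a n) :
    ∀ n, ‖a n‖ ≤ (‖a 0‖ + n * (‖a 1 - μ₁ * a 0‖ / ρ)) * ρ ^ n := by
  intro n
  induction n with
  | zero => simp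
  | succ n ih =>
    have hc := recur_closed a μ₁ μ₂ hrec n
    have hb : ‖a (n+1)‖ ≤ ‖μ₁‖ * ‖a n‖ + ‖μ₂‖ ^ n * ‖a 1 - μ₁ * a 0‖ := by
      calc ‖a (n+1)‖ ≤ ‖μ₁ * a n‖ + ‖μ₂ ^ n * (a 1 - μ₁ * a 0)‖ := by
            rw [hc]; exact norm_add_le _ _
        _ = ‖μ₁‖ * ‖a n‖ + ‖μ₂‖ ^ n * ‖a 1 - μ₁ * a 0‖ := by
            rw [norm_mul, norm_mul, norm_pow]
    have hμ2 : ‖μ₂‖ ^ n ≤ ρ ^ n := pow_le_pow_left₀ (norm_nonneg _) h2 n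
    have hρn : (0:ℝ) < ρ ^ n := pow_pos hρ n
    have hμ1a : ‖μ₁‖ * ‖a n‖ ≤ ρ * ((‖a 0‖ + n * (‖a 1 - μ₁ * a 0‖ / ρ)) * ρ ^ n) := by
      have h0 : ‖μ₁‖ * ‖a n‖ ≤ ρ * ‖a n‖ :=
        mul_le_mul_of_nonneg_right h1 (norm_nonneg _)
      exact h0.trans (mul_le_mul_of_nonneg_left ih hρ.le)
    have key : ‖μ₂‖ ^ n * ‖a 1 - μ₁ * a 0‖ ≤ (‖a 1 - μ₁ * a 0‖ / ρ) * ρ ^ (n+1) := by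
      have : (‖a 1 - μ₁ * a 0‖ / ρ) * ρ ^ (n+1) = ‖a 1 - μ₁ * a 0‖ * ρ ^ n := by
        field_simp; ring
      rw [this]
      calc ‖μ₂‖ ^ n * ‖a 1 - μ₁ * a 0‖ ≤ ρ ^ n * ‖a 1 - μ₁ * a 0‖ :=
            mul_le_mul_of_nonneg_right hμ2 (norm_nonneg _)
        _ = ‖a 1 - μ₁ * a 0‖ * ρ ^ n := by ring
    calc ‖a (n+1)‖ ≤ ‖μ₁‖ * ‖a n‖ + ‖μ₂‖ ^ n * ‖a 1 - μ₁ * a 0‖ := hb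
      _ ≤ ρ * ((‖a 0‖ + n * (‖a 1 - μ₁ * a 0‖ / ρ)) * ρ ^ n)
            + (‖a 1 - μ₁ * a 0‖ / ρ) * ρ ^ (n+1) := add_le_add hμ1a key
      _ = (‖a 0‖ + ((n:ℝ)+1) * (‖a 1 - μ₁ * a 0‖ / ρ)) * ρ ^ (n+1) := by ring
      _ = (‖a 0‖ + ((n+1 : ℕ):ℝ) * (‖a 1 - μ₁ * a 0‖ / ρ)) * ρ ^ (n+1) := by push_cast; ring

lemma summable_of_recur (a : ℕ → ℂ) (μ₁ μ₂ : ℂ) (ρ : ℝ) (hρ : 0 < ρ) (hρ1 : ρ < 1)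
    (h1 : ‖μ₁‖ ≤ ρ) (h2 : ‖μ₂‖ ≤ ρ)
    (hrec : ∀ n, a (n+2) = (μ₁ + μ₂) * a (n+1) - (μ₁ * μ₂) * a n) :
    Summable (fun n => ‖a n‖) := by
  set c := ‖a 1 - μ₁ * a 0‖ / ρ with hc
  have hsum : Summable (fun n : ℕ => (‖a 0‖ + n * c) * ρ ^ n) := by
    have hgeo : Summable (fun n : ℕ => ρ ^ n) :=
      summable_geometric_of_lt_one hρ.le hρ1
    have hngeo : Summable (fun n : ℕ => (n:ℝ) * ρ ^ n) := by
      have := summable_pow_mul_geometric_of_norm_lt_one 1 (r := ρ)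
        (by rwa [Real.norm_eq_abs, abs_of_pos hρ])
      simpa using this
    have := (hgeo.mul_left ‖a 0‖).add (hngeo.mul_left c)
    exact this.congr fun n => by ring
  exact Summable.of_nonneg_of_le (fun n => norm_nonneg _)
    (fun n => recur_bound a μ₁ μ₂ ρ hρ h1 h2 hrec n) hsum

lemma toR_trace (A : Matrix (Fin 2) (Fin 2) ℤ) : (toR A).trace = (A.trace : ℝ) := by
  simp [toR, Matrix.trace_fin_two, Matrix.map_apply]

lemma toR_det (A : Matrix (Fin 2) (Fin 2) ℤ) : (toR A).det = (A.det : ℝ) := by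
  simp [toR, Matrix.det_fin_two, Matrix.map_apply]

lemma mem_spectrum_of_quad (A : Matrix (Fin 2) (Fin 2) ℤ) (lam : ℂ)
    (h : lam ^ 2 - (A.trace : ℂ) * lam + (A.det : ℂ) = 0) :
    lam ∈ spectrum ℂ (A.map (Int.cast : ℤ → ℂ)) := by
  rw [spectrum.mem_iff, Matrix.isUnit_iff_isUnit_det, isUnit_iff_ne_zero]
  intro hdet
  apply hdet
  rw [Matrix.det_fin_two]
  simp only [Matrix.sub_apply, Matrix.algebraMap_matrix_apply, Matrix.map_apply]
  simp only [if_pos rfl, if_neg (by decide : ¬ (0:Fin 2) = 1), if_neg (by decide : ¬ (1:Fin 2) = 0),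
    Algebra.algebraMap_self_apply]
  rw [Matrix.trace_fin_two, Matrix.det_fin_two] at h
  push_cast at h ⊢
  linear_combination h

lemma det_toR_ne (A : Matrix (Fin 2) (Fin 2) ℤ) (hA : IsExpanding A) :
    (toR A).det ≠ 0 := by
  rw [toR_det]
  intro h
  have hz : A.det = 0 := by exact_mod_cast h
  have h0 : (A.det : ℂ) = 0 := by simp [hz]
  have := hA 0 (mem_spectrum_of_quad A 0 (by rw [h0]; ring))
  simp at this
  exact absurd this (by norm_num)

lemma inv_trace (A : Matrix (Fin 2) (Fin 2) ℤ) (hd : (toR A).det ≠ 0) :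
    ((toR A)⁻¹).trace = (toR A).trace / (toR A).det := by
  rw [Matrix.inv_def, Matrix.trace_smul, Matrix.adjugate_fin_two, Ring.inverse_eq_inv']
  rw [Matrix.trace_fin_two, Matrix.trace_fin_two]
  simp [Matrix.cons_val_zero, Matrix.cons_val_one]
  field_simp
  ring

lemma inv_det (A : Matrix (Fin 2) (Fin 2) ℤ) :
    ((toR A)⁻¹).det = ((toR A).det)⁻¹ := by
  rw [Matrix.det_nonsing_inv, Ring.inverse_eq_inv']

lemma exists_roots_small (A : Matrix (Fin 2) (Fin 2) ℤ) (hA : IsExpanding A) :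
    ∃ μ₁ μ₂ : ℂ, μ₁ + μ₂ = ((((toR A)⁻¹).trace : ℝ) : ℂ) ∧
      μ₁ * μ₂ = ((((toR A)⁻¹).det : ℝ) : ℂ) ∧ ‖μ₁‖ < 1 ∧ ‖μ₂‖ < 1 := by
  obtain ⟨μ₁, μ₂, hsum, hprod⟩ :=
    exists_quad_roots ((((toR A)⁻¹).trace : ℝ) : ℂ) ((((toR A)⁻¹).det : ℝ) : ℂ)
  have hd := det_toR_ne A hA
  have hdℂ : ((toR A).det : ℂ) ≠ 0 := by exact_mod_cast hd
  have hprodne : μ₁ * μ₂ ≠ 0 := by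
    rw [hprod, inv_det]
    push_cast [hd]
    exact inv_ne_zero hdℂ
  have key : ∀ μ : ℂ, μ * μ - (μ₁ + μ₂) * μ + μ₁ * μ₂ = 0 → μ ≠ 0 → ‖μ‖ < 1 := by
    intro μ hquad hμ0
    set lam := μ⁻¹ with hlam
    have hquad2 : ((toR A).det : ℂ) * (μ * μ) - ((toR A).trace : ℂ) * μ + 1 = 0 := by
      rw [hsum, hprod, inv_trace A hd, inv_det] at hquad
      have : (((toR A).trace / (toR A).det : ℝ) : ℂ) = ((toR A).trace : ℂ) / ((toR A).det : ℂ) := by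
        push_cast; ring
      rw [this] at hquad
      have h2 : ((((toR A).det)⁻¹ : ℝ) : ℂ) = (((toR A).det : ℂ))⁻¹ := by push_cast; ring
      rw [h2] at hquad
      field_simp at hquad
      linear_combination hquad
    have hlamquad : lam ^ 2 - (A.trace : ℂ) * lam + (A.det : ℂ) = 0 := by
      have ht : ((toR A).trace : ℂ) = (A.trace : ℂ) := by rw [toR_trace]; push_cast; ring
      have hdet : ((toR A).det : ℂ) = (A.det : ℂ) := by rw [toR_det, Complex.ofReal_intCast]
      rw [ht, hdet] at hquad2
      apply mul_left_cancel₀ (pow_ne_zero 2 hμ0)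
      rw [mul_zero]
      have h1 : μ ^ 2 * (lam ^ 2 - (A.trace : ℂ) * lam + (A.det : ℂ))
          = (μ * lam) ^ 2 - (A.trace : ℂ) * (μ * lam) * μ + (A.det : ℂ) * μ ^ 2 := by ring
      rw [h1, hlam, mul_inv_cancel₀ hμ0]
      linear_combination hquad2
    have hspec := hA lam (mem_spectrum_of_quad A lam hlamquad)
    have : 1 < ‖lam‖ := hspec
    have hμ : ‖μ‖ = ‖lam‖⁻¹ := by rw [hlam, norm_inv, inv_inv]
    rw [hμ]
    exact inv_lt_one_of_one_lt₀ this
  have h1 : μ₁ ≠ 0 := fun h => hprodne (by rw [h, zero_mul])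
  have h2 : μ₂ ≠ 0 := fun h => hprodne (by rw [h, mul_zero])
  exact ⟨μ₁, μ₂, hsum, hprod,
    key μ₁ (by ring) h1, key μ₂ (by ring) h2⟩

set_option maxHeartbeats 1000000 in
lemma summable_norm_pow_mulVec (A : Matrix (Fin 2) (Fin 2) ℤ) (hA : IsExpanding A)
    (w : Fin 2 → ℝ) :
    Summable fun n : ℕ => ‖(((toR A)⁻¹) ^ (n+1)).mulVec w‖ := by
  set M := (toR A)⁻¹ with hM
  obtain ⟨μ₁, μ₂, hsum, hprod, hlt1, hlt2⟩ := exists_roots_small A hA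
  have hd := det_toR_ne A hA
  have hdetM : M.det ≠ 0 := by rw [hM, inv_det]; exact inv_ne_zero hd
  have hprodne : μ₁ * μ₂ ≠ 0 := by
    rw [hprod]; exact_mod_cast hdetM
  have hμ1 : μ₁ ≠ 0 := fun h => hprodne (by rw [h, zero_mul])
  set ρ := max ‖μ₁‖ ‖μ₂‖ with hρdef
  have hρpos : 0 < ρ := lt_of_lt_of_le (norm_pos_iff.mpr hμ1) (le_max_left _ _)
  have hρ1 : ρ < 1 := max_lt hlt1 hlt2
  -- matrix recurrence
  have hrecM : ∀ n : ℕ, M ^ (n+2) = M.trace • M ^ (n+1) - M.det • M ^ n := by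
    intro n
    have h2 : M ^ (n+2) = M ^ 2 * M ^ n := by rw [add_comm n 2, pow_add]
    rw [h2, sq_eq M, Matrix.sub_mul, Matrix.smul_mul, Matrix.smul_mul, one_mul,
      ← pow_succ']
  -- vector recurrence
  set u : ℕ → Fin 2 → ℝ := fun n => (M ^ n).mulVec w with hu
  have hrecu : ∀ n, u (n+2) = M.trace • u (n+1) - M.det • u n := by
    intro n
    rw [hu]
    simp only
    rw [hrecM n, Matrix.sub_mulVec, Matrix.smul_mulVec, Matrix.smul_mulVec]
  -- componentwise summability
  have hcomp : ∀ j : Fin 2, Summable fun n => ‖u n j‖ := by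
    intro j
    set a : ℕ → ℂ := fun n => ((u n j : ℝ) : ℂ) with ha
    have hrec : ∀ n, a (n+2) = (μ₁ + μ₂) * a (n+1) - (μ₁ * μ₂) * a n := by
      intro n
      have h1 : u (n+2) j = M.trace * u (n+1) j - M.det * u n j := by
        rw [hrecu n]; simp [Pi.sub_apply, Pi.smul_apply, smul_eq_mul]
      have h2 : a (n+2) = (M.trace : ℂ) * a (n+1) - (M.det : ℂ) * a n := by
        rw [ha]; simp only; rw [h1]; push_cast; ring
      rw [h2, hsum, hprod]
    have := summable_of_recur a μ₁ μ₂ ρ hρpos hρ1 (le_max_left _ _) (le_max_right _ _) hrec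
    have heq : ∀ n, ‖a n‖ = ‖u n j‖ := by
      intro n; rw [ha]; exact Complex.norm_real _
    exact this.congr heq
  -- combine components
  have hnorm : Summable fun n => ‖u n‖ := by
    have h01 := (hcomp 0).add (hcomp 1)
    refine Summable.of_nonneg_of_le (fun n => norm_nonneg _) (fun n => ?_) h01
    have h0 : (0:ℝ) ≤ ‖u n 0‖ + ‖u n 1‖ := by positivity
    rw [pi_norm_le_iff_of_nonneg h0]
    intro i
    fin_cases i
    · simpa using le_add_of_nonneg_right (norm_nonneg (u n 1))
    · simpa using le_add_of_nonneg_left (norm_nonneg (u n 0))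
  exact (summable_nat_add_iff 1).mpr hnorm
section Coding
variable (M : Matrix (Fin 2) (Fin 2) ℝ) (w : Fin 2 → ℝ) (D : Set ℤ)

def trm (i : ℕ) (c : ℤ) : Fin 2 → ℝ := (c : ℝ) • ((M ^ (i+1)).mulVec w)

def SeqD : Set (ℕ → ℤ) := {d | ∀ i, d i ∈ D}

def phiF (d : ℕ → ℤ) : Fin 2 → ℝ := ∑' i, trm M w i (d i)

def cyl (L : List ℤ) : Set (ℕ → ℤ) :=
  {d | d ∈ SeqD D ∧ ∀ i : Fin L.length, d i = L.get i}

def piece (L : List ℤ) : Set (Fin 2 → ℝ) := phiF M w '' cyl D L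

def AdjL (L L' : List ℤ) : Prop :=
  L.length = L'.length ∧ (piece M w D L ∩ piece M w D L').Nonempty

def fmap (d : ℤ) (x : Fin 2 → ℝ) : Fin 2 → ℝ :=
  M.mulVec x + (d : ℝ) • (M.mulVec w)

def consSeq (d : ℤ) (a : ℕ → ℤ) : ℕ → ℤ := fun i => Nat.casesOn i d a

lemma bound_of_finite (hD : D.Finite) : ∃ K : ℝ, 0 ≤ K ∧ ∀ d ∈ D, |(d:ℝ)| ≤ K := by
  have h1 : ((fun d : ℤ => |(d:ℝ)|) '' D).Finite := hD.image _
  obtain ⟨K, hK⟩ := h1.bddAbove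
  refine ⟨max K 0, le_max_right _ _, fun d hd => ?_⟩
  exact le_trans (hK (Set.mem_image_of_mem _ hd)) (le_max_left _ _)

variable {M w D}

lemma summable_trm {K : ℝ} (hK : ∀ d ∈ D, |(d:ℝ)| ≤ K)
    (hs : Summable fun n : ℕ => ‖(M ^ (n+1)).mulVec w‖)
    {d : ℕ → ℤ} (hd : d ∈ SeqD D) :
    Summable (fun i => trm M w i (d i)) := by
  apply Summable.of_norm_bounded (g := fun n => K * ‖(M ^ (n+1)).mulVec w‖) (hs.mul_left K)
  intro i
  rw [trm, norm_smul, Real.norm_eq_abs]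
  exact mul_le_mul_of_nonneg_right (hK _ (hd i)) (norm_nonneg _)

lemma hasSum_phiF {K : ℝ} (hK : ∀ d ∈ D, |(d:ℝ)| ≤ K)
    (hs : Summable fun n : ℕ => ‖(M ^ (n+1)).mulVec w‖)
    {d : ℕ → ℤ} (hd : d ∈ SeqD D) :
    HasSum (fun i => trm M w i (d i)) (phiF M w d) :=
  (summable_trm hK hs hd).hasSum

/-- tail bound -/
def tailB (M : Matrix (Fin 2) (Fin 2) ℝ) (w : Fin 2 → ℝ) (K : ℝ) (n : ℕ) : ℝ :=
  ∑' i : ℕ, 2 * K * ‖(M ^ ((i + n) + 1)).mulVec w‖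

lemma tailB_tendsto {K : ℝ} : Filter.Tendsto (tailB M w K) Filter.atTop (nhds 0) := by
  exact tendsto_sum_nat_add (fun n : ℕ => 2 * K * ‖(M ^ (n+1)).mulVec w‖)

set_option maxHeartbeats 1000000 in
lemma phiF_dist {K : ℝ} (hK : ∀ d ∈ D, |(d:ℝ)| ≤ K)
    (hs : Summable fun n : ℕ => ‖(M ^ (n+1)).mulVec w‖)
    {d d' : ℕ → ℤ} (hd : d ∈ SeqD D) (hd' : d' ∈ SeqD D) (n : ℕ)
    (hagree : ∀ i < n, d i = d' i) :
    ‖phiF M w d - phiF M w d'‖ ≤ tailB M w K n := by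
  have h1 := (hasSum_phiF hK hs hd).sub (hasSum_phiF hK hs hd')
  set f : ℕ → Fin 2 → ℝ := fun i => trm M w i (d i) - trm M w i (d' i) with hf
  have hz : ∀ i < n, f i = 0 := by
    intro i hi
    simp [hf, hagree i hi]
  have h2 : HasSum (fun i => f (i + n)) (phiF M w d - phiF M w d') := by
    have := (hasSum_nat_add_iff' (f := f) n).mpr h1
    simpa [Finset.sum_eq_zero (fun i hi => hz i (Finset.mem_range.mp hi))] using this
  have hbnd : ∀ i : ℕ, ‖f (i + n)‖ ≤ 2 * K * ‖(M ^ ((i + n) + 1)).mulVec w‖ := by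
    intro i
    have e1 : ‖trm M w (i+n) (d (i+n))‖ ≤ K * ‖(M ^ ((i + n) + 1)).mulVec w‖ := by
      rw [trm, norm_smul, Real.norm_eq_abs]
      exact mul_le_mul_of_nonneg_right (hK _ (hd _)) (norm_nonneg _)
    have e2 : ‖trm M w (i+n) (d' (i+n))‖ ≤ K * ‖(M ^ ((i + n) + 1)).mulVec w‖ := by
      rw [trm, norm_smul, Real.norm_eq_abs]
      exact mul_le_mul_of_nonneg_right (hK _ (hd' _)) (norm_nonneg _)
    calc ‖f (i + n)‖ ≤ ‖trm M w (i+n) (d (i+n))‖ + ‖trm M w (i+n) (d' (i+n))‖ :=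
          norm_sub_le _ _
      _ ≤ 2 * K * ‖(M ^ ((i + n) + 1)).mulVec w‖ := by linarith
  have hsum2 : Summable fun i : ℕ => 2 * K * ‖(M ^ ((i + n) + 1)).mulVec w‖ := by
    have : Summable fun m : ℕ => 2 * K * ‖(M ^ (m + 1)).mulVec w‖ := hs.mul_left _
    exact (summable_nat_add_iff n).mpr this
  calc ‖phiF M w d - phiF M w d'‖ = ‖∑' i, f (i + n)‖ := by rw [h2.tsum_eq]
    _ ≤ ∑' i, ‖f (i + n)‖ := norm_tsum_le_tsum_norm
        (Summable.of_nonneg_of_le (fun _ => norm_nonneg _) hbnd hsum2)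
    _ ≤ ∑' i, 2 * K * ‖(M ^ ((i + n) + 1)).mulVec w‖ := by
        apply Summable.tsum_le_tsum hbnd
          (Summable.of_nonneg_of_le (fun _ => norm_nonneg _) hbnd hsum2) hsum2
    _ = tailB M w K n := rfl

lemma trm_succ (i : ℕ) (c : ℤ) : trm M w (i+1) c = M.mulVec (trm M w i c) := by
  rw [trm, trm, Matrix.mulVec_smul]
  congr 1
  rw [Matrix.mulVec_mulVec, ← pow_succ']

lemma phiF_cons {K : ℝ} (hK : ∀ d ∈ D, |(d:ℝ)| ≤ K)
    (hs : Summable fun n : ℕ => ‖(M ^ (n+1)).mulVec w‖)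
    {a : ℕ → ℤ} (ha : a ∈ SeqD D) (d : ℤ) :
    phiF M w (consSeq d a) = fmap M w d (phiF M w a) := by
  have h1 : HasSum (fun i => trm M w i (a i)) (phiF M w a) := hasSum_phiF hK hs ha
  set Lm : (Fin 2 → ℝ) →L[ℝ] (Fin 2 → ℝ) :=
    LinearMap.toContinuousLinearMap (Matrix.mulVecLin M) with hLm
  have h2 : HasSum (fun i => M.mulVec (trm M w i (a i))) (M.mulVec (phiF M w a)) := by
    have := h1.mapL Lm
    simpa [hLm] using this
  have h3 : HasSum (fun i => trm M w (i + 1) (consSeq d a (i + 1)))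
      (M.mulVec (phiF M w a)) := by
    refine h2.congr_fun ?_
    intro i
    rw [trm_succ]
    rfl
  have h4 : HasSum (fun i => trm M w i (consSeq d a i))
      (M.mulVec (phiF M w a) + ∑ i ∈ Finset.range 1, trm M w i (consSeq d a i)) := by
    apply (hasSum_nat_add_iff' 1).mp
    simpa [add_sub_cancel_right] using h3
  have h5 : ∑ i ∈ Finset.range 1, trm M w i (consSeq d a i) = (d : ℝ) • (M.mulVec w) := by
    simp [trm, consSeq, pow_one]
  rw [phiF, h4.tsum_eq, h5, fmap]

lemma consSeq_mem_cyl {a : ℕ → ℤ} {L : List ℤ} (ha : a ∈ cyl D L) {d : ℤ} (hd : d ∈ D) :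
    consSeq d a ∈ cyl D (d :: L) := by
  refine ⟨fun i => ?_, fun i => ?_⟩
  · cases i with
    | zero => exact hd
    | succ j => exact ha.1 j
  · refine Fin.cases ?_ (fun j => ?_) i
    · rfl
    · exact ha.2 j

lemma piece_cons {d : ℤ} (hd : d ∈ D) {K : ℝ} (hK : ∀ e ∈ D, |(e:ℝ)| ≤ K)
    (hs : Summable fun n : ℕ => ‖(M ^ (n+1)).mulVec w‖) (L : List ℤ) :
    piece M w D (d :: L) = fmap M w d '' piece M w D L := by
  ext x
  constructor
  · rintro ⟨e, he, rfl⟩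
    set a : ℕ → ℤ := fun i => e (i + 1) with haa
    have haS : a ∈ SeqD D := fun i => he.1 (i + 1)
    have hacyl : a ∈ cyl D L := by
      refine ⟨haS, fun i => ?_⟩
      have := he.2 i.succ
      simpa [haa] using this
    have he0 : e = consSeq d a := by
      funext i
      cases i with
      | zero => exact he.2 ⟨0, Nat.succ_pos _⟩
      | succ j => rfl
    rw [he0, phiF_cons hK hs haS d]
    exact ⟨phiF M w a, ⟨a, hacyl, rfl⟩, rfl⟩
  · rintro ⟨y, ⟨a, hacyl, rfl⟩, rfl⟩
    exact ⟨consSeq d a, consSeq_mem_cyl hacyl hd,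
      (phiF_cons hK hs hacyl.1 d)⟩

lemma piece_subset (L : List ℤ) : piece M w D L ⊆ phiF M w '' SeqD D :=
  Set.image_mono (fun _ h => h.1)

lemma exists_word {x : Fin 2 → ℝ} (hx : x ∈ phiF M w '' SeqD D) (n : ℕ) :
    ∃ L : List ℤ, L.length = n ∧ (∀ c ∈ L, c ∈ D) ∧ x ∈ piece M w D L := by
  obtain ⟨d, hd, rfl⟩ := hx
  refine ⟨List.ofFn (fun i : Fin n => d i), by simp, ?_, ?_⟩
  · intro c hc
    rw [List.mem_ofFn] at hc
    obtain ⟨i, rfl⟩ := hc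
    exact hd i
  · refine ⟨d, ⟨hd, fun i => ?_⟩, rfl⟩
    simp [List.get_ofFn]

/-- diameter bound for a piece -/
lemma piece_dist {K : ℝ} (hK : ∀ d ∈ D, |(d:ℝ)| ≤ K)
    (hs : Summable fun n : ℕ => ‖(M ^ (n+1)).mulVec w‖)
    {L : List ℤ} {x y : Fin 2 → ℝ} (hx : x ∈ piece M w D L) (hy : y ∈ piece M w D L) :
    dist x y ≤ tailB M w K L.length := by
  obtain ⟨a, ha, rfl⟩ := hx
  obtain ⟨b, hb, rfl⟩ := hy
  rw [dist_eq_norm]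
  apply phiF_dist hK hs ha.1 hb.1
  intro i hi
  rw [ha.2 ⟨i, hi⟩, hb.2 ⟨i, hi⟩]

/-- compactness of the attractor set -/
lemma isCompact_attr (hD : D.Finite)
    (hs : Summable fun n : ℕ => ‖(M ^ (n+1)).mulVec w‖) :
    IsCompact (phiF M w '' SeqD D) := by
  obtain ⟨K, hK0, hK⟩ := bound_of_finite D hD
  set F := hD.toFinset with hF
  set Ψ : (ℕ → F) → (Fin 2 → ℝ) := fun c => phiF M w (fun i => (c i : ℤ)) with hΨ
  have hrange : phiF M w '' SeqD D = Set.range Ψ := by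
    ext x
    constructor
    · rintro ⟨d, hd, rfl⟩
      refine ⟨fun i => ⟨d i, hD.mem_toFinset.mpr (hd i)⟩, rfl⟩
    · rintro ⟨c, rfl⟩
      exact ⟨fun i => (c i : ℤ), fun i => hD.mem_toFinset.mp (c i).2, rfl⟩
  rw [hrange]
  apply isCompact_range
  rw [hΨ]
  apply continuous_tsum (u := fun i => K * ‖(M ^ (i+1)).mulVec w‖)
  · intro i
    have h1 : Continuous fun c : ℕ → F => ((c i : ℤ) : ℝ) :=
      (continuous_of_discreteTopology (f := fun e : F => ((e : ℤ) : ℝ))).comp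
        (continuous_apply i)
    exact h1.smul continuous_const
  · exact hs.mul_left K
  · intro i c
    rw [trm, norm_smul, Real.norm_eq_abs]
    exact mul_le_mul_of_nonneg_right (hK _ (hD.mem_toFinset.mp (c i).2)) (norm_nonneg _)

def EdgeD (M : Matrix (Fin 2) (Fin 2) ℝ) (w : Fin 2 → ℝ) (D : Set ℤ) (d d' : ℤ) : Prop :=
  (piece M w D [d] ∩ piece M w D [d']).Nonempty

lemma edge_mem {d d' : ℤ} (h : EdgeD M w D d d') : d ∈ D ∧ d' ∈ D := by
  obtain ⟨x, ⟨a, ha, _⟩, ⟨b, hb, _⟩⟩ := h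
  constructor
  · have h2 := ha.2 ⟨0, by simp⟩
    simp only [List.get] at h2
    exact h2 ▸ ha.1 0
  · have h2 := hb.2 ⟨0, by simp⟩
    simp only [List.get] at h2
    exact h2 ▸ hb.1 0

lemma adj_cons {d : ℤ} (hd : d ∈ D) {K : ℝ} (hK : ∀ e ∈ D, |(e:ℝ)| ≤ K)
    (hs : Summable fun n : ℕ => ‖(M ^ (n+1)).mulVec w‖)
    {L L' : List ℤ} (h : AdjL M w D L L') : AdjL M w D (d :: L) (d :: L') := by
  obtain ⟨hlen, z, hz1, hz2⟩ := h
  refine ⟨by simp [hlen], fmap M w d z, ?_, ?_⟩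
  · rw [piece_cons hd hK hs]; exact ⟨z, hz1, rfl⟩
  · rw [piece_cons hd hK hs]; exact ⟨z, hz2, rfl⟩

lemma seq_mem_cyl_pref {a : ℕ → ℤ} (ha : a ∈ SeqD D) {e : ℤ} (h0 : a 0 = e) (n : ℕ) :
    a ∈ cyl D (e :: List.ofFn (fun i : Fin n => a (i + 1))) := by
  refine ⟨ha, fun i => ?_⟩
  refine Fin.cases ?_ (fun j => ?_) i
  · simpa using h0
  · simp [List.get_ofFn]

lemma edge_to_adj {d d' : ℤ} (h : EdgeD M w D d d') (n : ℕ) :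
    ∃ Lb Le' : List ℤ, Lb.length = n ∧ Le'.length = n ∧ (∀ c ∈ Lb, c ∈ D) ∧
      (∀ c ∈ Le', c ∈ D) ∧ AdjL M w D (d :: Lb) (d' :: Le') := by
  obtain ⟨x, ⟨a, ha, hxa⟩, ⟨b, hb, hxb⟩⟩ := h
  have ha0 : a 0 = d := ha.2 ⟨0, by simp⟩
  have hb0 : b 0 = d' := hb.2 ⟨0, by simp⟩
  refine ⟨List.ofFn (fun i : Fin n => a (i + 1)), List.ofFn (fun i : Fin n => b (i + 1)),
    by simp, by simp, ?_, ?_, by simp, x, ?_, ?_⟩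
  · intro c hc; rw [List.mem_ofFn] at hc; obtain ⟨i, rfl⟩ := hc; exact ha.1 _
  · intro c hc; rw [List.mem_ofFn] at hc; obtain ⟨i, rfl⟩ := hc; exact hb.1 _
  · exact ⟨a, seq_mem_cyl_pref ha.1 ha0 n, hxa⟩
  · exact ⟨b, seq_mem_cyl_pref hb.1 hb0 n, hxb⟩

lemma rtg_length {L L' : List ℤ} (h : Relation.ReflTransGen (AdjL M w D) L L') :
    L.length = L'.length := by
  induction h with
  | refl => rfl
  | tail _ hAdj ih => exact ih.trans hAdj.1

/-- word-level connectivity -/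
lemma words_conn {K : ℝ} (hK : ∀ e ∈ D, |(e:ℝ)| ≤ K)
    (hs : Summable fun n : ℕ => ‖(M ^ (n+1)).mulVec w‖)
    (hGC : ∀ d ∈ D, ∀ d' ∈ D, Relation.ReflTransGen (EdgeD M w D) d d') :
    ∀ n (L L' : List ℤ), L.length = n → L'.length = n →
      (∀ c ∈ L, c ∈ D) → (∀ c ∈ L', c ∈ D) →
      Relation.ReflTransGen (AdjL M w D) L L' := by
  intro n
  induction n with
  | zero =>
    intro L L' hL hL' _ _
    rw [List.length_eq_zero_iff] at hL hL'
    rw [hL, hL']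
  | succ n ih =>
    rintro (_ | ⟨d, Lt⟩) L' hL hL' hLD hL'D
    · simp at hL
    rcases L' with _ | ⟨d', Lt'⟩
    · simp at hL'
    have hd : d ∈ D := hLD d (by simp)
    have hd' : d' ∈ D := hL'D d' (by simp)
    have hLt : Lt.length = n := by simpa using hL
    have hLt' : Lt'.length = n := by simpa using hL'
    have hLtD : ∀ c ∈ Lt, c ∈ D := fun c hc => hLD c (by simp [hc])
    have hLt'D : ∀ c ∈ Lt', c ∈ D := fun c hc => hL'D c (by simp [hc])
    -- lift a word chain under a fixed first digit e ∈ D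
    have lift : ∀ e ∈ D, ∀ P P' : List ℤ, Relation.ReflTransGen (AdjL M w D) P P' →
        Relation.ReflTransGen (AdjL M w D) (e :: P) (e :: P') := by
      intro e he P P' hPP
      exact Relation.ReflTransGen.lift (fun Q => e :: Q)
        (fun _ _ hadj => adj_cons he hK hs hadj) _ _ hPP
    -- induction along the digit chain
    have main : ∀ e', Relation.ReflTransGen (EdgeD M w D) d e' → e' ∈ D →
        ∀ Le : List ℤ, Le.length = n → (∀ c ∈ Le, c ∈ D) →
        Relation.ReflTransGen (AdjL M w D) (d :: Lt) (e' :: Le) := by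
      intro e' hchain
      induction hchain with
      | refl =>
        intro _ Le hLe hLeD
        exact lift d hd _ _ (ih Lt Le hLt hLe hLtD hLeD)
      | tail hde hedge ihc =>
        rename_i bb ee
        intro he' Le hLe hLeD
        have hbb : bb ∈ D := (edge_mem hedge).1
        obtain ⟨Lb, Le'0, hLb, hLe'0, hLbD, hLe'0D, hadj⟩ := edge_to_adj hedge n
        have chain1 := ihc hbb Lb hLb hLbD
        have chain2 := lift ee he' _ _ (ih Le'0 Le hLe'0 hLe hLe'0D hLeD)
        exact (chain1.tail hadj).trans chain2
    exact main d' (hGC d hd d' hd') hd' Lt' hLt' hLt'D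

def ChainP (T : Set (Fin 2 → ℝ)) (ε : ℝ) (x y : Fin 2 → ℝ) : Prop :=
  ∃ (m : ℕ) (p : ℕ → Fin 2 → ℝ), p 0 = x ∧ p m = y ∧ (∀ k, p k ∈ T) ∧
    ∀ k < m, dist (p k) (p (k+1)) ≤ ε

lemma ChainP.pair {T : Set (Fin 2 → ℝ)} {ε : ℝ} {x y : Fin 2 → ℝ}
    (hx : x ∈ T) (hy : y ∈ T) (h : dist x y ≤ ε) : ChainP T ε x y := by
  refine ⟨1, fun k => if k = 0 then x else y, by simp, by simp, ?_, ?_⟩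
  · intro k; by_cases hk : k = 0 <;> simp [hk, hx, hy]
  · intro k hk
    interval_cases k
    simpa using h

lemma ChainP.trans {T : Set (Fin 2 → ℝ)} {ε : ℝ} {x y z : Fin 2 → ℝ}
    (h1 : ChainP T ε x y) (h2 : ChainP T ε y z) : ChainP T ε x z := by
  obtain ⟨m, p, hp0, hpm, hpT, hpd⟩ := h1
  obtain ⟨m', q, hq0, hqm, hqT, hqd⟩ := h2
  refine ⟨m + m', fun k => if k < m then p k else q (k - m), ?_, ?_, ?_, ?_⟩
  · by_cases hm : 0 < m
    · simp [hm, hp0]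
    · have : m = 0 := by omega
      subst this
      simp only [Nat.lt_irrefl, if_neg (lt_irrefl 0)]
      simp only [Nat.sub_zero, hq0, ← hp0, ← hpm]
      simp
  · have : ¬ (m + m' < m) := by omega
    simp only [this, if_false]
    simpa using hqm
  · intro k
    by_cases hk : k < m
    · simp only [hk, if_true]; exact hpT k
    · simp only [hk, if_false]; exact hqT _
  · intro k hk
    by_cases hk1 : k + 1 < m
    · have hk0 : k < m := by omega
      simp only [hk0, hk1, if_true]
      exact hpd k hk0
    · by_cases hk0 : k < m
      · -- k + 1 = m
        have he : k + 1 = m := by omega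
        simp only [hk0, hk1, if_true, if_false]
        have : q (k + 1 - m) = p m := by
          rw [he]; simp [hq0, hpm]
        rw [this, ← he]
        exact hpd k hk0
      · simp only [hk0, hk1, if_false]
        have h1 : k - m < m' := by omega
        have h2 : k + 1 - m = (k - m) + 1 := by omega
        rw [h2]
        exact hqd _ h1

lemma exists_jump {α : Type*} {p : ℕ → α} {S : Set α} {m : ℕ}
    (h0 : p 0 ∈ S) (hm : p m ∉ S) : ∃ k < m, p k ∈ S ∧ p (k+1) ∉ S := by
  by_contra h
  push_neg at h
  have : ∀ k ≤ m, p k ∈ S := by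
    intro k hk
    induction k with
    | zero => exact h0
    | succ j ihj => exact h j (by omega) (ihj (by omega))
  exact hm (this m le_rfl)

lemma chain_of_adjchain {K : ℝ} (hK : ∀ e ∈ D, |(e:ℝ)| ≤ K)
    (hs : Summable fun n : ℕ => ‖(M ^ (n+1)).mulVec w‖)
    {ε : ℝ} {n : ℕ} (hbound : tailB M w K n ≤ ε) :
    ∀ L L' : List ℤ, Relation.ReflTransGen (AdjL M w D) L L' → L.length = n →
      ∀ x ∈ piece M w D L, ∀ y ∈ piece M w D L',
        ChainP (phiF M w '' SeqD D) ε x y := by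
  intro L L' h
  induction h with
  | refl =>
    intro hL x hx y hy
    exact ChainP.pair (piece_subset _ hx) (piece_subset _ hy)
      (le_trans (by rw [← hL]; exact piece_dist hK hs hx hy) hbound)
  | tail hLL hAdj ihc =>
    rename_i Lmid Lfin
    intro hL x hx y hy
    obtain ⟨hlen, z, hz1, hz2⟩ := hAdj
    have hLfin : Lfin.length = n := by
      rw [← hlen, ← rtg_length hLL, hL]
    have c1 := ihc hL x hx z hz1
    have c2 : ChainP (phiF M w '' SeqD D) ε z y :=
      ChainP.pair (piece_subset _ hz2) (piece_subset _ hy)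
        (le_trans (by rw [← hLfin]; exact piece_dist hK hs hz2 hy) hbound)
    exact c1.trans c2

/-- graph connectivity implies the attractor is preconnected -/
lemma conn_of_graph (hD : D.Finite)
    (hs : Summable fun n : ℕ => ‖(M ^ (n+1)).mulVec w‖)
    (hGC : ∀ d ∈ D, ∀ d' ∈ D, Relation.ReflTransGen (EdgeD M w D) d d') :
    IsPreconnected (phiF M w '' SeqD D) := by
  obtain ⟨K, hK0, hK⟩ := bound_of_finite D hD
  set T := phiF M w '' SeqD D with hT
  -- every two points are ε-chained for every ε > 0
  have hchain : ∀ ε > 0, ∀ x ∈ T, ∀ y ∈ T, ChainP T ε x y := by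
    intro ε hε x hx y hy
    obtain ⟨n, hn⟩ := ((tailB_tendsto (M := M) (w := w) (K := K)).eventually
      (gt_mem_nhds hε)).exists
    obtain ⟨L, hLlen, hLD, hxL⟩ := exists_word hx n
    obtain ⟨L', hL'len, hL'D, hyL'⟩ := exists_word hy n
    have hrtg := words_conn hK hs hGC n L L' hLlen hL'len hLD hL'D
    exact chain_of_adjchain hK hs hn.le L L' hrtg hLlen x hxL y hyL'
  have hcompact : IsCompact T := isCompact_attr hD hs
  rw [isPreconnected_closed_iff]
  intro t t' ht ht' hcover hne hne'
  by_contra hinter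
  rw [Set.not_nonempty_iff_eq_empty] at hinter
  set K₁ := T ∩ t with hK₁
  set K₂ := T ∩ t' with hK₂
  have hdisj : Disjoint K₁ K₂ := by
    rw [Set.disjoint_iff_inter_eq_empty]
    rw [← hinter]
    ext z; simp [hK₁, hK₂, Set.mem_inter_iff]; tauto
  have hcpt1 : IsCompact K₁ := hcompact.inter_right ht
  have hcl2 : IsClosed K₂ := (hcompact.inter_right ht').isClosed
  obtain ⟨δ, hδ, hthick⟩ := hdisj.exists_thickenings hcpt1 hcl2
  obtain ⟨x, hxT, hxt⟩ := hne
  obtain ⟨y, hyT, hyt⟩ := hne'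
  obtain ⟨m, p, hp0, hpm, hpT, hpd⟩ := hchain (δ/2) (by positivity) x hxT y hyT
  have hx1 : p 0 ∈ K₁ := by rw [hp0]; exact ⟨hxT, hxt⟩
  have hy2 : p m ∉ K₁ := by
    rw [hpm]
    intro hyK₁
    have : y ∈ T ∩ (t ∩ t') := ⟨hyT, hyK₁.2, hyt⟩
    rw [hinter] at this
    exact this
  obtain ⟨k, hkm, hk1, hk2⟩ := exists_jump hx1 hy2
  have hpk2 : p (k+1) ∈ K₂ := by
    have hmem := hpT (k+1)
    rcases hcover hmem with hc | hc
    · exact absurd ⟨hmem, hc⟩ hk2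
    · exact ⟨hmem, hc⟩
  have h1 : p (k+1) ∈ Metric.thickening δ K₁ := by
    rw [Metric.mem_thickening_iff]
    exact ⟨p k, hk1, by
      rw [dist_comm]
      calc dist (p k) (p (k+1)) ≤ δ/2 := hpd k hkm
        _ < δ := by linarith⟩
  have h2 : p (k+1) ∈ Metric.thickening δ K₂ :=
    Metric.self_subset_thickening hδ _ hpk2
  exact Set.disjoint_iff.mp hthick ⟨h1, h2⟩ |>.elim

lemma piece_nil : piece M w D ([] : List ℤ) = phiF M w '' SeqD D := by
  apply Set.eq_of_subset_of_subset (piece_subset _)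
  rintro x ⟨a, ha, rfl⟩
  exact ⟨a, ⟨ha, fun i => i.elim0⟩, rfl⟩

lemma piece_singleton {d : ℤ} (hd : d ∈ D) {K : ℝ} (hK : ∀ e ∈ D, |(e:ℝ)| ≤ K)
    (hs : Summable fun n : ℕ => ‖(M ^ (n+1)).mulVec w‖) :
    piece M w D [d] = fmap M w d '' (phiF M w '' SeqD D) := by
  rw [show [d] = d :: ([] : List ℤ) from rfl, piece_cons hd hK hs, piece_nil]

lemma continuous_fmap (d : ℤ) : Continuous (fmap M w d) := by
  unfold fmap
  exact (Matrix.mulVecLin M).toContinuousLinearMap.continuous.add continuous_const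

/-- the attractor being connected implies graph connectivity -/
lemma graph_of_conn (hD : D.Finite)
    (hs : Summable fun n : ℕ => ‖(M ^ (n+1)).mulVec w‖)
    (hc : IsConnected (phiF M w '' SeqD D)) :
    ∀ d ∈ D, ∀ d' ∈ D, Relation.ReflTransGen (EdgeD M w D) d d' := by
  obtain ⟨K, hK0, hK⟩ := bound_of_finite D hD
  intro d hd d' hd'
  set T := phiF M w '' SeqD D with hT
  have hTne : T.Nonempty := hc.nonempty
  have hcompact : IsCompact T := isCompact_attr hD hs
  have hpieceC : ∀ e ∈ D, IsCompact (piece M w D [e]) := by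
    intro e he
    rw [piece_singleton he hK hs]
    exact (hcompact.image (continuous_fmap e))
  have hpiecene : ∀ e ∈ D, (piece M w D [e]).Nonempty := by
    intro e he
    rw [piece_singleton he hK hs]
    exact hTne.image _
  have hcover : T ⊆ ⋃ e ∈ D, piece M w D [e] := by
    rintro x ⟨a, ha, rfl⟩
    refine Set.mem_biUnion (ha 0) ⟨a, ⟨ha, fun i => ?_⟩, rfl⟩
    refine Fin.cases rfl (fun j => j.elim0) i
  set S : Set ℤ := {e ∈ D | Relation.ReflTransGen (EdgeD M w D) d e} with hS
  by_contra hnot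
  have hd'S : d' ∉ S := fun h => hnot h.2
  set U : Set (Fin 2 → ℝ) := ⋃ e ∈ S, piece M w D [e] with hU
  set V : Set (Fin 2 → ℝ) := ⋃ e ∈ D \ S, piece M w D [e] with hV
  have hSsub : S ⊆ D := fun e he => he.1
  have hUc : IsClosed U := Set.Finite.isClosed_biUnion (hD.subset hSsub)
    (fun e he => (hpieceC e (hSsub he)).isClosed)
  have hVc : IsClosed V := Set.Finite.isClosed_biUnion (hD.subset (Set.diff_subset))
    (fun e he => (hpieceC e he.1).isClosed)
  have hcov2 : T ⊆ U ∪ V := by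
    intro x hx
    obtain ⟨e, he, hxe⟩ := Set.mem_iUnion₂.mp (hcover hx)
    by_cases heS : e ∈ S
    · exact Or.inl (Set.mem_biUnion heS hxe)
    · exact Or.inr (Set.mem_biUnion ⟨he, heS⟩ hxe)
  have hdS : d ∈ S := ⟨hd, Relation.ReflTransGen.refl⟩
  have hUne : (T ∩ U).Nonempty := by
    obtain ⟨x, hx⟩ := hpiecene d hd
    exact ⟨x, piece_subset _ hx, Set.mem_biUnion hdS hx⟩
  have hVne : (T ∩ V).Nonempty := by
    obtain ⟨x, hx⟩ := hpiecene d' hd'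
    exact ⟨x, piece_subset _ hx, Set.mem_biUnion ⟨hd', hd'S⟩ hx⟩
  obtain ⟨x, hxT, hxU, hxV⟩ := isPreconnected_closed_iff.mp hc.isPreconnected
    U V hUc hVc hcov2 hUne hVne
  obtain ⟨e, heS, hxe⟩ := Set.mem_iUnion₂.mp hxU
  obtain ⟨e', he', hxe'⟩ := Set.mem_iUnion₂.mp hxV
  have hEdge : EdgeD M w D e e' := ⟨x, hxe, hxe'⟩
  exact he'.2 ⟨he'.1, heS.2.tail hEdge⟩

lemma edgeD_iff {K : ℝ} (hK : ∀ e ∈ D, |(e:ℝ)| ≤ K)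
    (hs : Summable fun n : ℕ => ‖(M ^ (n+1)).mulVec w‖)
    (hinj : Function.Injective M.mulVec)
    {d d' : ℤ} (hd : d ∈ D) (hd' : d' ∈ D) :
    EdgeD M w D d d' ↔
      ((d':ℝ) - (d:ℝ)) • w ∈ (phiF M w '' SeqD D) - (phiF M w '' SeqD D) := by
  constructor
  · rintro ⟨x, hx1, hx2⟩
    rw [piece_singleton hd hK hs] at hx1
    rw [piece_singleton hd' hK hs] at hx2
    obtain ⟨z, hz, hze⟩ := hx1
    obtain ⟨z', hz', hz'e⟩ := hx2
    have h1 : M.mulVec (z + (d:ℝ) • w) = M.mulVec (z' + (d':ℝ) • w) := by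
      rw [Matrix.mulVec_add, Matrix.mulVec_add, Matrix.mulVec_smul, Matrix.mulVec_smul]
      rw [show M.mulVec z + (d:ℝ) • M.mulVec w = fmap M w d z from rfl]
      rw [show M.mulVec z' + (d':ℝ) • M.mulVec w = fmap M w d' z' from rfl]
      rw [hze, hz'e]
    have h2 := hinj h1
    rw [Set.mem_sub]
    refine ⟨z, hz, z', hz', ?_⟩
    have h3 : z - z' = (d':ℝ) • w - (d:ℝ) • w := by
      rw [sub_eq_sub_iff_add_eq_add, h2]
      abel
    rw [sub_smul]
    exact h3
  · intro hl
    rw [Set.mem_sub] at hl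
    obtain ⟨z, hz, z', hz', hzz⟩ := hl
    have heq : fmap M w d z = fmap M w d' z' := by
      unfold fmap
      have : z = z' + ((d':ℝ) - (d:ℝ)) • w := by
        rw [← hzz]; abel
      rw [this, Matrix.mulVec_add, Matrix.mulVec_smul]
      rw [sub_smul]
      module
    refine ⟨fmap M w d z, ?_, ?_⟩
    · rw [piece_singleton hd hK hs]; exact ⟨z, hz, rfl⟩
    · rw [piece_singleton hd' hK hs, heq]; exact ⟨z', hz', rfl⟩

lemma neg_pow_mulVec (n : ℕ) : ((-M) ^ n).mulVec w = ((-1:ℝ) ^ n) • ((M ^ n).mulVec w) := by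
  rw [show (-M) = (-1:ℝ) • M by simp, _root_.smul_pow, Matrix.smul_mulVec]

lemma summable_neg (hs : Summable fun n : ℕ => ‖(M ^ (n+1)).mulVec w‖) :
    Summable fun n : ℕ => ‖((-M) ^ (n+1)).mulVec w‖ := by
  refine hs.congr fun n => ?_
  rw [neg_pow_mulVec, norm_smul]
  simp

/-- key difference-set lemma at the phiF level -/
lemma diff_subset_phi {K : ℝ} (hK : ∀ e ∈ D, |(e:ℝ)| ≤ K)
    (hs : Summable fun n : ℕ => ‖(M ^ (n+1)).mulVec w‖) :
    (phiF M w '' SeqD D) - (phiF M w '' SeqD D) ⊆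
      (phiF (-M) w '' SeqD D) - (phiF (-M) w '' SeqD D) := by
  have hsN : Summable fun n : ℕ => ‖((-M) ^ (n+1)).mulVec w‖ := summable_neg hs
  intro l hl
  rw [Set.mem_sub] at hl
  obtain ⟨x, ⟨dx, hdx, rfl⟩, y, ⟨dy, hdy, rfl⟩, rfl⟩ := hl
  set e : ℕ → ℤ := fun i => if Even i then dy i else dx i with he_def
  set e' : ℕ → ℤ := fun i => if Even i then dx i else dy i with he'_def
  have he : e ∈ SeqD D := by
    intro i; by_cases h : Even i <;> simp [he_def, h, hdx i, hdy i]
  have he' : e' ∈ SeqD D := by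
    intro i; by_cases h : Even i <;> simp [he'_def, h, hdx i, hdy i]
  have h1 : HasSum (fun i => trm (-M) w i (e i) - trm (-M) w i (e' i))
      (phiF (-M) w e - phiF (-M) w e') :=
    (hasSum_phiF hK hsN he).sub (hasSum_phiF hK hsN he')
  have h3 : HasSum (fun i => trm M w i (dx i) - trm M w i (dy i))
      (phiF M w dx - phiF M w dy) :=
    (hasSum_phiF hK hs hdx).sub (hasSum_phiF hK hs hdy)
  have h2 : (fun i => trm (-M) w i (e i) - trm (-M) w i (e' i)) =
      (fun i => trm M w i (dx i) - trm M w i (dy i)) := by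
    funext i
    unfold trm
    rw [neg_pow_mulVec]
    by_cases h : Even i
    · have hodd : Odd (i + 1) := Even.add_one h
      rw [hodd.neg_one_pow]
      simp only [he_def, he'_def, if_pos h]
      module
    · have heven : Even (i + 1) := Odd.add_one (Nat.not_even_iff_odd.mp h)
      rw [heven.neg_one_pow]
      simp only [he_def, he'_def, if_neg h]
      module
  have heq : phiF (-M) w e - phiF (-M) w e' = phiF M w dx - phiF M w dy :=
    (h2 ▸ h1).unique h3
  rw [Set.mem_sub]
  exact ⟨phiF (-M) w e, ⟨e, he, rfl⟩, phiF (-M) w e', ⟨e', he', rfl⟩, heq⟩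

end Coding

lemma toR_neg (A : Matrix (Fin 2) (Fin 2) ℤ) : toR (-A) = -(toR A) := by
  ext i j; simp [toR]

lemma map_neg_int (A : Matrix (Fin 2) (Fin 2) ℤ) :
    (-A).map (Int.cast : ℤ → ℂ) = -(A.map (Int.cast : ℤ → ℂ)) := by
  ext i j; simp

lemma isExpanding_neg (A : Matrix (Fin 2) (Fin 2) ℤ) (hA : IsExpanding A) :
    IsExpanding (-A) := by
  intro z hz
  rw [map_neg_int] at hz
  have h1 : -z ∈ spectrum ℂ (A.map (Int.cast : ℤ → ℂ)) := by
    rw [spectrum.mem_iff] at hz ⊢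
    intro hu
    apply hz
    have : algebraMap ℂ (Matrix (Fin 2) (Fin 2) ℂ) z - -A.map Int.cast
        = -((algebraMap ℂ (Matrix (Fin 2) (Fin 2) ℂ)) (-z) - A.map Int.cast) := by
      rw [map_neg]; abel
    rw [this]
    exact (IsUnit.neg_iff _).mpr hu
  have := hA (-z) h1
  rwa [norm_neg] at this

lemma neg_inv2 (X : Matrix (Fin 2) (Fin 2) ℝ) : (-X)⁻¹ = -(X⁻¹) := by
  rw [Matrix.inv_def, Matrix.inv_def]
  have h1 : (-X).det = X.det := by rw [Matrix.det_neg]; simp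
  have h2 : (-X).adjugate = -(X.adjugate) := by
    rw [Matrix.adjugate_fin_two, Matrix.adjugate_fin_two]
    ext i j; fin_cases i <;> fin_cases j <;> simp
  rw [h1, h2, smul_neg]

lemma minv_inj (A : Matrix (Fin 2) (Fin 2) ℤ) (hA : IsExpanding A) :
    Function.Injective ((toR A)⁻¹).mulVec := by
  intro x y hxy
  have hdet : IsUnit (toR A).det := isUnit_iff_ne_zero.mpr (det_toR_ne A hA)
  have h1 := congrArg (fun z => (toR A).mulVec z) hxy
  simpa only [Matrix.mulVec_mulVec, Matrix.mul_nonsing_inv _ hdet, Matrix.one_mulVec] using h1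

lemma attractor_eq (A : Matrix (Fin 2) (Fin 2) ℤ) (D : Set ℤ) (v : Fin 2 → ℤ)
    {K : ℝ} (hK : ∀ e ∈ D, |(e:ℝ)| ≤ K)
    (hs : Summable fun n : ℕ => ‖(((toR A)⁻¹) ^ (n+1)).mulVec (vecR v)‖) :
    attractor A D v = phiF ((toR A)⁻¹) (vecR v) '' SeqD D := by
  ext x
  constructor
  · rintro ⟨d, hd, hsum⟩
    refine ⟨d, hd, ?_⟩
    exact (hsum.unique (hasSum_phiF hK hs hd)).symm
  · rintro ⟨d, hd, rfl⟩
    exact ⟨d, hd, hasSum_phiF hK hs hd⟩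

/-- `T(A, Dv)` and `T(-A, Dv)` have the same difference set; consequently
one is connected iff the other is. -/
theorem stmt11 (A : Matrix (Fin 2) (Fin 2) ℤ)
    (hA : IsExpanding A)
    (v : Fin 2 → ℤ)
    (hv : LinearIndependent ℝ ![vecR v, (toR A).mulVec (vecR v)])
    (D : Set ℤ) (hD : D.Finite) :
    (∀ l : Fin 2 → ℝ,
      l ∈ attractor A D v - attractor A D v ↔
        l ∈ attractor (-A) D v - attractor (-A) D v) ∧
    (IsConnected (attractor A D v) ↔ IsConnected (attractor (-A) D v)) := by
  obtain ⟨K, hK0, hK⟩ := bound_of_finite D hD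
  set M : Matrix (Fin 2) (Fin 2) ℝ := (toR A)⁻¹ with hM
  set w : Fin 2 → ℝ := vecR v with hw
  have hsA : Summable fun n : ℕ => ‖(M ^ (n+1)).mulVec w‖ :=
    summable_norm_pow_mulVec A hA w
  have hsB : Summable fun n : ℕ => ‖((-M) ^ (n+1)).mulVec w‖ := summable_neg hsA
  have hMB : (toR (-A))⁻¹ = -M := by rw [toR_neg, neg_inv2, hM]
  have heqA : attractor A D v = phiF M w '' SeqD D := attractor_eq A D v hK hsA
  have heqB : attractor (-A) D v = phiF (-M) w '' SeqD D := by
    rw [attractor_eq (-A) D v hK (by rw [hMB]; exact hsB), hMB]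
  -- Part 1: difference sets coincide
  have hdiff : ∀ l : Fin 2 → ℝ,
      l ∈ attractor A D v - attractor A D v ↔
        l ∈ attractor (-A) D v - attractor (-A) D v := by
    intro l
    rw [heqA, heqB]
    constructor
    · exact fun h => diff_subset_phi hK hsA h
    · intro h
      have h2 := diff_subset_phi hK hsB h
      rwa [neg_neg] at h2
  refine ⟨hdiff, ?_⟩
  -- Part 2: connectedness
  have hinjA : Function.Injective M.mulVec := minv_inj A hA
  have hinjB : Function.Injective (-M).mulVec := by
    rw [← hMB]; exact minv_inj (-A) (isExpanding_neg A hA)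
  -- the edge relations coincide
  have hedge : ∀ d d' : ℤ, EdgeD M w D d d' ↔ EdgeD (-M) w D d d' := by
    intro d d'
    constructor
    · intro h
      obtain ⟨hd, hd'⟩ := edge_mem h
      rw [edgeD_iff hK hsA hinjA hd hd'] at h
      rw [edgeD_iff hK hsB hinjB hd hd']
      have := (hdiff (((d':ℝ) - (d:ℝ)) • w)).mp (by rw [heqA]; exact h)
      rwa [heqB] at this
    · intro h
      obtain ⟨hd, hd'⟩ := edge_mem h
      rw [edgeD_iff hK hsB hinjB hd hd'] at h
      rw [edgeD_iff hK hsA hinjA hd hd']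
      have := (hdiff (((d':ℝ) - (d:ℝ)) • w)).mpr (by rw [heqB]; exact h)
      rwa [heqA] at this
  rw [heqA, heqB]
  constructor
  · intro hc
    have hGC := graph_of_conn hD hsA hc
    have hGC' : ∀ d ∈ D, ∀ d' ∈ D, Relation.ReflTransGen (EdgeD (-M) w D) d d' := by
      intro d hd d' hd'
      exact Relation.ReflTransGen.mono (fun a b hab => (hedge a b).mp hab) _ _ (hGC d hd d' hd')
    refine ⟨?_, conn_of_graph hD hsB hGC'⟩
    obtain ⟨x, d, hd, _⟩ := hc.nonempty
    exact ⟨phiF (-M) w d, ⟨d, hd, rfl⟩⟩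
  · intro hc
    have hGC := graph_of_conn hD hsB hc
    have hGC' : ∀ d ∈ D, ∀ d' ∈ D, Relation.ReflTransGen (EdgeD M w D) d d' := by
      intro d hd d' hd'
      exact Relation.ReflTransGen.mono (fun a b hab => (hedge a b).mpr hab) _ _ (hGC d hd d' hd')
    refine ⟨?_, conn_of_graph hD hsA hGC'⟩
    obtain ⟨x, d, hd, _⟩ := hc.nonempty
    exact ⟨phiF M w d, ⟨d, hd, rfl⟩⟩
end
end

section
/- Let A be a 2×2 expanding integer matrix with characteristic polynomial f(x) = x² + q (i.e. p = 0) where |q| ≥ 3, let m ≥ −1 be an integer, and let 𝒟 = {0, 1, …, |q| − 2, |q| + m}v where v ∈ ℤ² is such that {v, Av} is linearly independent over ℝ. Then the self-affine fractal T = T(A, 𝒟) is connected if and only if m = −1, i.e. if and only if 𝒟 = {0, 1, …, |q| − 1}v. -/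
open Matrix Polynomial Pointwise

noncomputable section

namespace Stmt12Aux

/-- one-dimensional digit expansion set -/
def oneDim (D : Set ℤ) (r : ℝ) : Set ℝ :=
  {x | ∃ e : ℕ → ℤ, (∀ k, e k ∈ D) ∧ HasSum (fun k => (e k : ℝ) * r ^ k) x}

variable {A : Matrix (Fin 2) (Fin 2) ℤ} {q : ℤ}

lemma intMatrix_sq (hchar : A.charpoly = X ^ 2 + C q) : A * A = (-q) • 1 := by
  have h := Matrix.aeval_self_charpoly A
  rw [hchar] at h
  simp only [map_add, aeval_X_pow, aeval_C] at h
  have h2 : A ^ 2 = -(algebraMap ℤ (Matrix (Fin 2) (Fin 2) ℤ) q) := by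
    rw [eq_neg_iff_add_eq_zero]; exact h
  rw [pow_two] at h2
  rw [h2, Algebra.algebraMap_eq_smul_one]
  simp

lemma toR_sq (hchar : A.charpoly = X ^ 2 + C q) : toR A * toR A = (-(q:ℝ)) • 1 := by
  have h := intMatrix_sq hchar
  have h2 := congrArg (fun M : Matrix (Fin 2) (Fin 2) ℤ => (Int.castRingHom ℝ).mapMatrix M) h
  simp only [_root_.map_mul] at h2
  have e1 : (Int.castRingHom ℝ).mapMatrix A = toR A := rfl
  rw [e1] at h2
  rw [h2]
  ext i j
  simp [RingHom.mapMatrix_apply, Matrix.map_apply, Matrix.smul_apply, Matrix.one_apply, apply_ite]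
  rw [← Matrix.diagonal_intCast (n := Fin 2) (α := ℤ) q]
  simp [Matrix.diagonal_apply]
  split <;> simp_all

lemma toR_inv (hchar : A.charpoly = X ^ 2 + C q) (hq : (q:ℝ) ≠ 0) :
    (toR A)⁻¹ = (-(q:ℝ)⁻¹) • toR A := by
  apply Matrix.inv_eq_right_inv
  rw [Matrix.mul_smul, toR_sq hchar, smul_smul]
  rw [show (-(q:ℝ)⁻¹) * (-(q:ℝ)) = 1 by field_simp]
  simp

lemma toR_inv_sq (hchar : A.charpoly = X ^ 2 + C q) (hq : (q:ℝ) ≠ 0) :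
    (toR A)⁻¹ * (toR A)⁻¹ = (-(q:ℝ)⁻¹) • 1 := by
  rw [toR_inv hchar hq, Matrix.smul_mul, Matrix.mul_smul, toR_sq hchar, smul_smul, smul_smul]
  congr 1
  field_simp

lemma toR_inv_pow_even (hchar : A.charpoly = X ^ 2 + C q) (hq : (q:ℝ) ≠ 0) (k : ℕ) :
    (toR A)⁻¹ ^ (2*k) = ((-(q:ℝ)⁻¹) ^ k) • 1 := by
  induction k with
  | zero => simp
  | succ n ih =>
      have : 2*(n+1) = 2*n + 2 := by ring
      rw [this, pow_add, ih, pow_two, toR_inv_sq hchar hq, Matrix.smul_mul, Matrix.mul_smul,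
        smul_smul, one_mul, pow_succ]

lemma toR_inv_pow_odd (hchar : A.charpoly = X ^ 2 + C q) (hq : (q:ℝ) ≠ 0) (k : ℕ) :
    (toR A)⁻¹ ^ (2*k+1) = ((-(q:ℝ)⁻¹) ^ k) • (toR A)⁻¹ := by
  rw [pow_add, toR_inv_pow_even hchar hq, pow_one, Matrix.smul_mul, one_mul]

set_option maxHeartbeats 1000000 in
lemma hasSum_interleave (hchar : A.charpoly = X ^ 2 + C q) (hq : (q:ℝ) ≠ 0)
    (v : Fin 2 → ℤ) (d : ℕ → ℤ) (s t : ℝ)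
    (hs : HasSum (fun k => (d (2*k+1) : ℝ) * (-(q:ℝ)⁻¹) ^ k) s)
    (ht : HasSum (fun k => (d (2*k) : ℝ) * (-(q:ℝ)⁻¹) ^ k) t) :
    HasSum (fun i : ℕ => (d i : ℝ) • ((toR A)⁻¹ ^ (i + 1)).mulVec (vecR v))
      (((-(q:ℝ)⁻¹) * s) • vecR v + t • ((toR A)⁻¹.mulVec (vecR v))) := by
  have heven : HasSum (fun k : ℕ => (d (2*k) : ℝ) • ((toR A)⁻¹ ^ (2*k + 1)).mulVec (vecR v))
      (t • ((toR A)⁻¹.mulVec (vecR v))) := by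
    have hfun : (fun k : ℕ => (d (2*k) : ℝ) • ((toR A)⁻¹ ^ (2*k + 1)).mulVec (vecR v))
        = fun k => ((d (2*k) : ℝ) * (-(q:ℝ)⁻¹) ^ k) • ((toR A)⁻¹.mulVec (vecR v)) := by
      funext k
      rw [toR_inv_pow_odd hchar hq, Matrix.smul_mulVec, smul_smul]
    rw [hfun]
    exact ht.smul_const _
  have hodd : HasSum (fun k : ℕ => (d (2*k+1) : ℝ) • ((toR A)⁻¹ ^ (2*k + 1 + 1)).mulVec (vecR v))
      (s • ((-(q:ℝ)⁻¹) • vecR v)) := by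
    have hfun : (fun k : ℕ => (d (2*k+1) : ℝ) • ((toR A)⁻¹ ^ (2*k + 1 + 1)).mulVec (vecR v))
        = fun k => ((d (2*k+1) : ℝ) * (-(q:ℝ)⁻¹) ^ k) • ((-(q:ℝ)⁻¹) • vecR v) := by
      funext k
      have h2 : 2*k + 1 + 1 = 2*(k+1) := by ring
      rw [h2, toR_inv_pow_even hchar hq, Matrix.smul_mulVec, Matrix.one_mulVec,
        smul_smul, smul_smul]
      congr 1
      rw [pow_succ]
      ring
    rw [hfun]
    exact hs.smul_const _
  have h := HasSum.even_add_odd (f := fun i : ℕ => (d i : ℝ) • ((toR A)⁻¹ ^ (i + 1)).mulVec (vecR v)) heven hodd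
  have hfin : t • ((toR A)⁻¹.mulVec (vecR v)) + s • ((-(q:ℝ)⁻¹) • vecR v)
      = ((-(q:ℝ)⁻¹) * s) • vecR v + t • ((toR A)⁻¹.mulVec (vecR v)) := by
    rw [smul_smul, mul_comm s (-(q:ℝ)⁻¹), add_comm]
  rw [hfin] at h
  exact h

lemma summable_digits (D : Set ℤ) (N : ℤ) (hD : D ⊆ Set.Icc 0 N) (r : ℝ) (hr : |r| < 1)
    (e : ℕ → ℤ) (he : ∀ k, e k ∈ D) : Summable (fun k => (e k : ℝ) * r ^ k) := by
  apply Summable.of_norm_bounded (g := fun k => (N:ℝ) * |r| ^ k)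
    ((summable_geometric_of_lt_one (abs_nonneg r) hr).mul_left _)
  intro k
  rw [norm_mul, norm_pow]
  have h1 := hD (he k)
  simp only [Set.mem_Icc] at h1
  have h2 : ‖((e k : ℤ) : ℝ)‖ ≤ (N : ℝ) := by
    rw [Real.norm_eq_abs, abs_of_nonneg (by exact_mod_cast h1.1 : (0:ℝ) ≤ ((e k : ℤ):ℝ))]
    exact_mod_cast h1.2
  have h3 : (0:ℝ) ≤ ‖r‖ ^ k := by positivity
  calc ‖((e k : ℤ) : ℝ)‖ * ‖r‖ ^ k ≤ (N:ℝ) * ‖r‖ ^ k := by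
        apply mul_le_mul_of_nonneg_right h2 h3
    _ = (N:ℝ) * |r| ^ k := by rw [Real.norm_eq_abs]

lemma attractor_eq (hchar : A.charpoly = X ^ 2 + C q) (hq : (q:ℝ) ≠ 0)
    (hr1 : |(-(q:ℝ)⁻¹)| < 1)
    (v : Fin 2 → ℤ) (D : Set ℤ) (N : ℤ) (hD : D ⊆ Set.Icc 0 N) :
    attractor A D v =
      (fun p : ℝ × ℝ => ((-(q:ℝ)⁻¹) * p.1) • vecR v + p.2 • ((toR A)⁻¹.mulVec (vecR v))) ''
        ((oneDim D (-(q:ℝ)⁻¹)) ×ˢ (oneDim D (-(q:ℝ)⁻¹))) := by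
  ext x
  constructor
  · rintro ⟨d, hdD, hsum⟩
    have hse : Summable (fun k => (d (2*k+1) : ℝ) * (-(q:ℝ)⁻¹) ^ k) :=
      summable_digits D N hD _ hr1 _ (fun k => hdD _)
    have hsf : Summable (fun k => (d (2*k) : ℝ) * (-(q:ℝ)⁻¹) ^ k) :=
      summable_digits D N hD _ hr1 _ (fun k => hdD _)
    obtain ⟨s, hs⟩ := hse
    obtain ⟨t, ht⟩ := hsf
    have h := hasSum_interleave hchar hq v d s t hs ht
    refine ⟨(s, t), ⟨⟨fun k => d (2*k+1), fun k => hdD _, hs⟩,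
      ⟨fun k => d (2*k), fun k => hdD _, ht⟩⟩, ?_⟩
    exact (h.unique hsum)
  · rintro ⟨⟨s, t⟩, ⟨⟨e, heD, hes⟩, ⟨f, hfD, hft⟩⟩, rfl⟩
    classical
    set d : ℕ → ℤ := fun i => if Even i then f (i/2) else e (i/2) with hd
    have hde : ∀ k, d (2*k+1) = e k := by
      intro k
      have h1 : ¬ Even (2*k+1) := by simp [Nat.even_iff]
      have h2 : (2*k+1)/2 = k := by omega
      simp [hd, h1, h2]
    have hdf : ∀ k, d (2*k) = f k := by
      intro k
      have h1 : Even (2*k) := even_two_mul k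
      have h2 : (2*k)/2 = k := by omega
      simp [hd, h1, h2]
    refine ⟨d, ?_, ?_⟩
    · intro i
      by_cases h : Even i <;> simp [hd, h] <;> [exact hfD _; exact heD _]
    · have hs' : HasSum (fun k => (d (2*k+1) : ℝ) * (-(q:ℝ)⁻¹) ^ k) s := by
        convert hes using 2 with k
        rw [hde k]
      have ht' : HasSum (fun k => (d (2*k) : ℝ) * (-(q:ℝ)⁻¹) ^ k) t := by
        convert hft using 2 with k
        rw [hdf k]
      exact hasSum_interleave hchar hq v d s t hs' ht'

lemma single_mem_oneDim (D : Set ℤ) (r : ℝ) (c : ℤ) (hc : c ∈ D) (h0 : (0:ℤ) ∈ D) :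
    (c : ℝ) ∈ oneDim D r := by
  classical
  refine ⟨fun k => if k = 0 then c else 0, ?_, ?_⟩
  · intro k
    dsimp only
    split <;> assumption
  have h := hasSum_ite_eq (0:ℕ) ((c:ℝ))
  convert h using 1
  funext k
  by_cases hk : k = 0 <;> simp [hk]

lemma oneDim_shift (D : Set ℤ) (r : ℝ) (hr0 : r ≠ 0) (x : ℝ) (hx : x ∈ oneDim D r) :
    ∃ d ∈ D, ∃ y ∈ oneDim D r, x = (d:ℝ) + r * y := by
  obtain ⟨e, he, hsum⟩ := hx
  have h1 : HasSum (fun n => (e (n+1):ℝ) * r^(n+1)) (x - (e 0:ℝ)) := by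
    rw [hasSum_nat_add_iff (f := fun k => ((e k : ℤ):ℝ) * r^k) 1]
    simpa using hsum
  have h2 : HasSum (fun n => (e (n+1):ℝ) * r^n) ((x - (e 0:ℝ)) * r⁻¹) := by
    have h3 := h1.mul_right r⁻¹
    have h4 : (fun n => (e (n+1):ℝ) * r^n) = fun i => (e (i+1):ℝ) * r^(i+1) * r⁻¹ := by
      funext n
      rw [pow_succ, mul_assoc, mul_inv_cancel_right₀ hr0]
    rw [h4]; exact h3
  refine ⟨e 0, he 0, (x - (e 0:ℝ)) * r⁻¹, ⟨fun n => e (n+1), fun n => he _, h2⟩, ?_⟩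
  field_simp
  ring

lemma oneDim_bounds_pos (D : Set ℤ) (N : ℤ) (hD : D ⊆ Set.Icc 0 N) (r : ℝ)
    (hr0 : 0 ≤ r) (hr1 : r < 1) (x : ℝ) (hx : x ∈ oneDim D r) :
    0 ≤ x ∧ x ≤ (N:ℝ) * (1-r)⁻¹ := by
  obtain ⟨e, he, hsum⟩ := hx
  have hbd : ∀ k, (0:ℤ) ≤ e k ∧ e k ≤ N := fun k => Set.mem_Icc.1 (hD (he k))
  constructor
  · refine hasSum_le (f := fun _ : ℕ => (0:ℝ)) ?_ hasSum_zero hsum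
    intro k
    have h1 : (0:ℝ) ≤ (e k : ℝ) := by exact_mod_cast (hbd k).1
    positivity
  · refine hasSum_le (g := fun k : ℕ => (N:ℝ) * r ^ k) ?_ hsum
      ((hasSum_geometric_of_lt_one hr0 hr1).mul_left _)
    intro k
    have h1 : (e k : ℝ) ≤ (N:ℝ) := by exact_mod_cast (hbd k).2
    have h2 : (0:ℝ) ≤ r ^ k := by positivity
    exact mul_le_mul_of_nonneg_right h1 h2

lemma oneDim_bounds_neg (D : Set ℤ) (N : ℤ) (hD : D ⊆ Set.Icc 0 N) (r : ℝ)
    (hr0 : r ≤ 0) (hr1 : |r| < 1) (x : ℝ) (hx : x ∈ oneDim D r) :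
    (N:ℝ) * r * (1-r^2)⁻¹ ≤ x ∧ x ≤ (N:ℝ) * (1-r^2)⁻¹ := by
  classical
  obtain ⟨e, he, hsum⟩ := hx
  have hbd : ∀ k, (0:ℤ) ≤ e k ∧ e k ≤ N := fun k => Set.mem_Icc.1 (hD (he k))
  have hrsq0 : 0 ≤ r^2 := sq_nonneg r
  have hrsq1 : r^2 < 1 := by
    have := abs_lt.1 hr1
    nlinarith [this.1, this.2]
  have hgeo : HasSum (fun j : ℕ => (r^2) ^ j) ((1 - r^2)⁻¹) :=
    hasSum_geometric_of_lt_one hrsq0 hrsq1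
  -- upper bound series : N on even indices, 0 on odd
  have hup : HasSum (fun k : ℕ => if Even k then (N:ℝ) * r ^ k else 0) ((N:ℝ) * (1-r^2)⁻¹) := by
    have heven : HasSum (fun j : ℕ => if Even (2*j) then (N:ℝ) * r ^ (2*j) else 0)
        ((N:ℝ) * (1-r^2)⁻¹) := by
      have h1 : (fun j : ℕ => if Even (2*j) then (N:ℝ) * r ^ (2*j) else 0)
          = fun j : ℕ => (N:ℝ) * (r^2) ^ j := by
        funext j
        rw [if_pos (even_two_mul j), pow_mul]
      rw [h1]
      exact hgeo.mul_left _
    have hodd : HasSum (fun j : ℕ => if Even (2*j+1) then (N:ℝ) * r ^ (2*j+1) else 0) 0 := by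
      have h1 : (fun j : ℕ => if Even (2*j+1) then (N:ℝ) * r ^ (2*j+1) else 0)
          = fun _ : ℕ => (0:ℝ) := by
        funext j
        rw [if_neg (by simp [Nat.even_iff])]
      rw [h1]
      exact hasSum_zero
    have h := HasSum.even_add_odd (f := fun k : ℕ => if Even k then (N:ℝ) * r ^ k else 0)
      heven hodd
    simpa using h
  have hlo : HasSum (fun k : ℕ => if Even k then 0 else (N:ℝ) * r ^ k) ((N:ℝ) * r * (1-r^2)⁻¹) := by
    have heven : HasSum (fun j : ℕ => if Even (2*j) then 0 else (N:ℝ) * r ^ (2*j)) 0 := by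
      have h1 : (fun j : ℕ => if Even (2*j) then 0 else (N:ℝ) * r ^ (2*j))
          = fun _ : ℕ => (0:ℝ) := by
        funext j
        rw [if_pos (even_two_mul j)]
      rw [h1]
      exact hasSum_zero
    have hodd : HasSum (fun j : ℕ => if Even (2*j+1) then 0 else (N:ℝ) * r ^ (2*j+1))
        ((N:ℝ) * r * (1-r^2)⁻¹) := by
      have h1 : (fun j : ℕ => if Even (2*j+1) then 0 else (N:ℝ) * r ^ (2*j+1))
          = fun j : ℕ => ((N:ℝ) * r) * (r^2) ^ j := by
        funext j
        rw [if_neg (by simp [Nat.even_iff]), pow_add, pow_mul, pow_one]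
        ring
      rw [h1]
      exact hgeo.mul_left ((N:ℝ) * r)
    have h := HasSum.even_add_odd (f := fun k : ℕ => if Even k then 0 else (N:ℝ) * r ^ k)
      heven hodd
    simpa using h
  constructor
  · refine hasSum_le ?_ hlo hsum
    intro k
    by_cases hk : Even k
    · rw [if_pos hk]
      have h1 : (0:ℝ) ≤ (e k : ℝ) := by exact_mod_cast (hbd k).1
      have h2 : (0:ℝ) ≤ r ^ k := hk.pow_nonneg r
      positivity
    · rw [if_neg hk]
      have h1 : (e k : ℝ) ≤ (N:ℝ) := by exact_mod_cast (hbd k).2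
      have h2 : r ^ k ≤ 0 := (Nat.odd_iff.2 (by simpa [Nat.even_iff] using hk)).pow_nonpos hr0
      nlinarith
  · refine hasSum_le ?_ hsum hup
    intro k
    by_cases hk : Even k
    · rw [if_pos hk]
      have h1 : (e k : ℝ) ≤ (N:ℝ) := by exact_mod_cast (hbd k).2
      have h2 : (0:ℝ) ≤ r ^ k := hk.pow_nonneg r
      exact mul_le_mul_of_nonneg_right h1 h2
    · rw [if_neg hk]
      have h1 : (0:ℝ) ≤ (e k : ℝ) := by exact_mod_cast (hbd k).1
      have h2 : r ^ k ≤ 0 := (Nat.odd_iff.2 (by simpa [Nat.even_iff] using hk)).pow_nonpos hr0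
      nlinarith

set_option maxHeartbeats 2000000 in
lemma exists_cut (q m : ℤ) (hq : 3 ≤ |q|) (hm : 0 ≤ m) :
    ∃ c : ℝ, 0 < c ∧ c < ((|q| + m : ℤ) : ℝ) ∧
      ∀ x ∈ oneDim (Set.Icc 0 (|q|-2) ∪ {|q|+m}) (-(q:ℝ)⁻¹), x ≠ c := by
  set D : Set ℤ := Set.Icc 0 (|q|-2) ∪ {|q|+m} with hDdef
  have hD : D ⊆ Set.Icc 0 (|q| + m) := by
    intro d hd
    rcases hd with hd | hd
    · rw [Set.mem_Icc] at hd ⊢; omega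
    · rw [Set.mem_singleton_iff] at hd; rw [Set.mem_Icc]; omega
  set Qr : ℝ := ((|q| : ℤ) : ℝ) with hQrdef
  have hQr3 : (3:ℝ) ≤ Qr := by rw [hQrdef]; exact_mod_cast hq
  set mR : ℝ := (m:ℝ) with hmRdef
  have hmR : 0 ≤ mR := by rw [hmRdef]; exact_mod_cast hm
  have hNcast : (((|q| + m : ℤ)) : ℝ) = Qr + mR := by push_cast [hQrdef, hmRdef]; ring
  have keygap : Qr + mR < (mR + 2) * (Qr - 1) := by nlinarith
  have hsign : q ≤ -3 ∨ 3 ≤ q := by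
    rcases le_or_gt q 0 with h | h
    · left; rw [abs_of_nonpos h] at hq; omega
    · right; rw [abs_of_pos h] at hq; omega
  rcases hsign with hneg | hpos
  · -- q negative, r = Qr⁻¹ > 0
    have hQq : (q:ℝ) = -Qr := by
      rw [hQrdef, abs_of_nonpos (by omega : q ≤ 0)]; push_cast; ring
    have hrq : -(q:ℝ)⁻¹ = Qr⁻¹ := by rw [hQq, inv_neg, neg_neg]
    set r : ℝ := Qr⁻¹ with hrdef
    have hr0 : 0 ≤ r := by positivity
    have hr1 : r < 1 := by
      rw [hrdef, inv_lt_one_iff₀]; right; linarith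
    have hub : ∀ y ∈ oneDim D (-(q:ℝ)⁻¹), 0 ≤ y ∧ y ≤ (Qr + mR) * (1-r)⁻¹ := by
      intro y hy
      have := oneDim_bounds_pos D (|q|+m) hD (-(q:ℝ)⁻¹) (hrq ▸ hr0) (hrq ▸ hr1) y hy
      rwa [hNcast, hrq] at this
    have h1r : (0:ℝ) < 1 - r := by linarith
    have hQr1 : (0:ℝ) < Qr - 1 := by linarith
    have hkey2 : (Qr + mR) * r * (1-r)⁻¹ < mR + 2 := by
      rw [hrdef]
      have h5 : (Qr + mR) * Qr⁻¹ * (1 - Qr⁻¹)⁻¹ = (Qr + mR) / (Qr - 1) := by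
        rw [show (1 - Qr⁻¹) = (Qr - 1) / Qr by field_simp]
        field_simp
      rw [h5, div_lt_iff₀ hQr1]
      linarith
    set lowmax : ℝ := (Qr - 2) + r * ((Qr + mR) * (1-r)⁻¹) with hlowdef
    refine ⟨(lowmax + (Qr + mR))/2, ?_, ?_, ?_⟩
    · have : (0:ℝ) ≤ r * ((Qr + mR) * (1-r)⁻¹) := by positivity
      rw [hlowdef]; nlinarith
    · rw [hNcast, hlowdef]
      have : r * ((Qr + mR) * (1-r)⁻¹) < mR + 2 := by
        calc r * ((Qr + mR) * (1-r)⁻¹) = (Qr + mR) * r * (1-r)⁻¹ := by ring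
        _ < mR + 2 := hkey2
      linarith
    · intro x hx
      obtain ⟨d, hdD, y, hyF, hxy⟩ := oneDim_shift D (-(q:ℝ)⁻¹)
        (by rw [hrq]; positivity) x hx
      obtain ⟨hy0, hyub⟩ := hub y hyF
      rcases hdD with hd | hd
      · rw [Set.mem_Icc] at hd
        have hdR : (d:ℝ) ≤ Qr - 2 := by
          rw [hQrdef]; push_cast; exact_mod_cast (by omega : (d:ℤ) ≤ |q| - 2)
        have : x ≤ lowmax := by
          rw [hxy, hrq, hlowdef]
          have : Qr⁻¹ * y ≤ r * ((Qr + mR) * (1-r)⁻¹) := by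
            rw [hrdef]
            apply mul_le_mul_of_nonneg_left hyub (by positivity)
          linarith
        intro hc
        rw [hc] at this
        have hlow : lowmax < (lowmax + (Qr + mR))/2 := by
          have h2 : lowmax < Qr + mR := by
            rw [hlowdef]
            have : r * ((Qr + mR) * (1-r)⁻¹) < mR + 2 := by
              calc r * ((Qr + mR) * (1-r)⁻¹) = (Qr + mR) * r * (1-r)⁻¹ := by ring
              _ < mR + 2 := hkey2
            linarith
          linarith
        linarith
      · rw [Set.mem_singleton_iff] at hd
        have hdR : (d:ℝ) = Qr + mR := by rw [hd]; exact hNcast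
        have hxlb : Qr + mR ≤ x := by
          rw [hxy, hdR, hrq]
          have : 0 ≤ Qr⁻¹ * y := by positivity
          linarith
        intro hc
        have h2 : lowmax < Qr + mR := by
          rw [hlowdef]
          have : r * ((Qr + mR) * (1-r)⁻¹) < mR + 2 := by
            calc r * ((Qr + mR) * (1-r)⁻¹) = (Qr + mR) * r * (1-r)⁻¹ := by ring
            _ < mR + 2 := hkey2
          linarith
        rw [hc] at hxlb
        linarith
  · -- q positive, r = -Qr⁻¹ < 0
    have hQq : (q:ℝ) = Qr := by
      rw [hQrdef, abs_of_pos (by omega : 0 < q)]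
    have hrq : -(q:ℝ)⁻¹ = -Qr⁻¹ := by rw [hQq]
    set r : ℝ := -Qr⁻¹ with hrdef
    have hQrpos : (0:ℝ) < Qr := by linarith
    have hr0 : r ≤ 0 := by rw [hrdef]; simp; positivity
    have hrabs : |r| < 1 := by
      rw [hrdef, abs_neg, abs_inv, abs_of_pos hQrpos, inv_lt_one_iff₀]
      right; linarith
    have hrsq1 : r^2 < 1 := by nlinarith [abs_lt.1 hrabs]
    have hu_pos : (0:ℝ) < (1 - r^2)⁻¹ := by
      apply inv_pos.2; linarith
    set u : ℝ := (1 - r^2)⁻¹ with hudef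
    set NR : ℝ := Qr + mR with hNRdef
    have hNRpos : 0 < NR := by rw [hNRdef]; linarith
    have hbnds : ∀ y ∈ oneDim D (-(q:ℝ)⁻¹), NR * r * u ≤ y ∧ y ≤ NR * u := by
      intro y hy
      have := oneDim_bounds_neg D (|q|+m) hD (-(q:ℝ)⁻¹) (hrq ▸ hr0) (hrq ▸ hrabs) y hy
      rw [hNcast, hrq] at this
      exact this
    have hQr1 : (0:ℝ) < Qr - 1 := by linarith
    have h5 : NR * (r^2 - r) * u = NR / (Qr - 1) := by
      rw [hudef, hrdef]
      rw [show (1 - (-Qr⁻¹)^2) = (Qr^2 - 1)/Qr^2 by field_simp]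
      rw [show ((-Qr⁻¹)^2 - (-Qr⁻¹)) = (1 + Qr)/Qr^2 by field_simp; ring]
      have hQsq : Qr^2 - 1 ≠ 0 := by nlinarith
      field_simp
      ring
    have hkey2 : NR * (r^2 - r) * u < mR + 2 := by
      rw [h5, div_lt_iff₀ hQr1]
      rw [hNRdef]
      linarith
    set lowmax : ℝ := Qr - 2 + NR * r^2 * u with hlowdef
    set highmin : ℝ := NR + NR * r * u with jhighdef
    have hgap : lowmax < highmin := by
      rw [hlowdef, jhighdef, hNRdef]
      rw [hNRdef] at hkey2
      nlinarith [hkey2]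
    have hlow_pos : 0 < lowmax := by
      rw [hlowdef]
      have : 0 ≤ NR * r^2 * u := by positivity
      linarith
    have hhigh_le : highmin ≤ NR := by
      rw [jhighdef]
      have h7 : NR * r * u ≤ 0 :=
        mul_nonpos_iff.2 (Or.inr ⟨mul_nonpos_iff.2 (Or.inl ⟨hNRpos.le, hr0⟩), hu_pos.le⟩)
      linarith
    refine ⟨(lowmax + highmin)/2, by linarith, ?_, ?_⟩
    · rw [hNcast]; linarith
    · intro x hx
      obtain ⟨d, hdD, y, hyF, hxy⟩ := oneDim_shift D (-(q:ℝ)⁻¹)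
        (by rw [hrq, hrdef]; simp; positivity) x hx
      obtain ⟨hylb, hyub⟩ := hbnds y hyF
      rcases hdD with hd | hd
      · rw [Set.mem_Icc] at hd
        have hdR : (d:ℝ) ≤ Qr - 2 := by
          rw [hQrdef]; push_cast; exact_mod_cast (by omega : (d:ℤ) ≤ |q| - 2)
        have hxub : x ≤ lowmax := by
          rw [hxy, hrq, hlowdef]
          have h8 : r * y ≤ r * (NR * r * u) := mul_le_mul_of_nonpos_left hylb hr0
          have h9 : r * (NR * r * u) = NR * r^2 * u := by ring
          linarith
        intro hc; rw [hc] at hxub; linarith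
      · rw [Set.mem_singleton_iff] at hd
        have hdR : (d:ℝ) = NR := by rw [hd, hNcast]
        have hxlb : highmin ≤ x := by
          rw [hxy, hrq, hdR, jhighdef]
          have h8 : r * (NR * u) ≤ r * y := mul_le_mul_of_nonpos_left hyub hr0
          have h9 : r * (NR * u) = NR * r * u := by ring
          linarith
        intro hc; rw [hc] at hxlb; linarith

lemma Icc_subset_oneDim (D : Set ℤ) (N : ℤ) (hD : D ⊆ Set.Icc 0 N) (r : ℝ)
    (hr0 : r ≠ 0) (hr1 : |r| < 1) (L M : ℝ) (dig : ℝ → ℤ)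
    (hdig : ∀ y ∈ Set.Icc L M, dig y ∈ D ∧ (y - dig y) / r ∈ Set.Icc L M) :
    Set.Icc L M ⊆ oneDim D r := by
  intro x hx
  set Y : ℕ → ℝ := fun n => Nat.rec x (fun _ y => (y - dig y)/r) n with hYdef
  have hY0 : Y 0 = x := rfl
  have hYs : ∀ n, Y (n+1) = (Y n - dig (Y n))/r := fun n => rfl
  have hmem : ∀ n, Y n ∈ Set.Icc L M := by
    intro n
    induction n with
    | zero => exact hY0 ▸ hx
    | succ k ih => rw [hYs k]; exact (hdig _ ih).2
  set e : ℕ → ℤ := fun n => dig (Y n) with hedef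
  have heD : ∀ n, e n ∈ D := fun n => (hdig _ (hmem n)).1
  have hrec : ∀ n, Y n - (e n : ℝ) = r * Y (n+1) := by
    intro n
    rw [hYs n]
    field_simp
    rfl
  have key : ∀ n, x - ∑ k ∈ Finset.range n, (e k : ℝ) * r^k = r^n * Y n := by
    intro n
    induction n with
    | zero => simp [hY0]
    | succ k ih =>
        rw [Finset.sum_range_succ]
        have : x - (∑ i ∈ Finset.range k, (e i : ℝ) * r^i + (e k : ℝ) * r^k)
            = r^k * Y k - (e k:ℝ) * r^k := by linarith [ih]
        rw [this]
        have h2 : r^k * Y k - (e k:ℝ) * r^k = r^k * (Y k - (e k:ℝ)) := by ring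
        rw [h2, hrec k, pow_succ]
        ring
  have hsummable : Summable (fun k => (e k : ℝ) * r ^ k) :=
    summable_digits D N hD r hr1 e heD
  refine ⟨e, heD, ?_⟩
  rw [hsummable.hasSum_iff_tendsto_nat]
  have hB : ∀ n, ‖r^n * Y n‖ ≤ (max |L| |M|) * |r|^n := by
    intro n
    rw [norm_mul, norm_pow, Real.norm_eq_abs, Real.norm_eq_abs]
    have h1 := hmem n
    rw [Set.mem_Icc] at h1
    have h2 : |Y n| ≤ max |L| |M| := by
      rw [abs_le]
      constructor
      · have := neg_abs_le L; have := le_max_left |L| |M|; linarith [h1.1]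
      · have := le_abs_self M; have := le_max_right |L| |M|; linarith [h1.2]
    calc |r|^n * |Y n| ≤ |r|^n * (max |L| |M|) := by
          apply mul_le_mul_of_nonneg_left h2 (by positivity)
      _ = (max |L| |M|) * |r|^n := by ring
  have h0 : Filter.Tendsto (fun n => r^n * Y n) Filter.atTop (nhds 0) := by
    apply squeeze_zero_norm hB
    have h9 : |(|r|)| < 1 := by rwa [abs_abs]
    have := (tendsto_pow_atTop_nhds_zero_of_abs_lt_one h9).const_mul (max |L| |M|)
    simpa using this
  have hfin : Filter.Tendsto (fun n => x - r^n * Y n) Filter.atTop (nhds x) := by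
    have := Filter.Tendsto.sub (tendsto_const_nhds (x := x) (f := Filter.atTop (α := ℕ))) h0
    simpa using this
  apply hfin.congr
  intro n
  linarith [key n]

lemma oneDim_eq_pos (Q : ℤ) (hQ : 3 ≤ Q) :
    oneDim (Set.Icc 0 (Q-1)) ((Q:ℝ))⁻¹ = Set.Icc (0:ℝ) (Q:ℝ) := by
  have hQr : (3:ℝ) ≤ (Q:ℝ) := by exact_mod_cast hQ
  have hQpos : (0:ℝ) < (Q:ℝ) := by linarith
  have hr0 : (0:ℝ) ≤ (Q:ℝ)⁻¹ := by positivity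
  have hr1 : ((Q:ℝ))⁻¹ < 1 := by rw [inv_lt_one_iff₀]; right; linarith
  have hNcast : (((Q-1 : ℤ)):ℝ) = (Q:ℝ) - 1 := by push_cast; ring
  have hub : ((Q-1:ℤ):ℝ) * (1 - (Q:ℝ)⁻¹)⁻¹ = (Q:ℝ) := by
    rw [hNcast, show (1 - (Q:ℝ)⁻¹) = ((Q:ℝ) - 1)/(Q:ℝ) by field_simp]
    field_simp
    rw [div_self (by linarith : (Q:ℝ) - 1 ≠ 0)]
  apply Set.Subset.antisymm
  · intro x hx
    have h := oneDim_bounds_pos _ (Q-1) (le_refl _) _ hr0 hr1 x hx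
    rw [hub] at h
    exact Set.mem_Icc.2 h
  · apply Icc_subset_oneDim (Set.Icc 0 (Q-1)) (Q-1) (le_refl _) _ (by positivity) 
      (by rw [abs_of_nonneg hr0]; exact hr1) 0 (Q:ℝ) (fun y => min ⌊y⌋ (Q-1))
    intro y hy
    rw [Set.mem_Icc] at hy
    constructor
    · rw [Set.mem_Icc]
      constructor
      · exact le_min (Int.floor_nonneg.2 hy.1) (by omega)
      · exact min_le_right _ _
    · rw [Set.mem_Icc]
      have hcast : ((min ⌊y⌋ (Q-1) : ℤ):ℝ) = min ((⌊y⌋:ℤ):ℝ) ((Q:ℝ) - 1) := by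
        rw [Int.cast_min, Int.cast_sub, Int.cast_one]
      have hd1 : ((min ⌊y⌋ (Q-1) : ℤ):ℝ) ≤ y := by
        rw [hcast]
        exact le_trans (min_le_left _ _) (Int.floor_le y)
      have hd2 : y - 1 ≤ ((min ⌊y⌋ (Q-1) : ℤ):ℝ) := by
        rw [hcast]
        apply le_min
        · linarith [Int.lt_floor_add_one y]
        · linarith [hy.2]
      rw [div_eq_mul_inv, inv_inv]
      constructor
      · apply mul_nonneg (by linarith) (by linarith)
      · nlinarith [hd2, hQpos]

set_option maxHeartbeats 2000000 in
lemma oneDim_eq_neg (Q : ℤ) (hQ : 3 ≤ Q) :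
    oneDim (Set.Icc 0 (Q-1)) (-(Q:ℝ)⁻¹)
      = Set.Icc (-(Q:ℝ)/((Q:ℝ)+1)) ((Q:ℝ)^2/((Q:ℝ)+1)) := by
  have hQr : (3:ℝ) ≤ (Q:ℝ) := by exact_mod_cast hQ
  have hQpos : (0:ℝ) < (Q:ℝ) := by linarith
  have hQne : (Q:ℝ) ≠ 0 := ne_of_gt hQpos
  have hQ1ne : (Q:ℝ) + 1 ≠ 0 := by linarith
  have hQsqne : (Q:ℝ)^2 - 1 ≠ 0 := by nlinarith
  have hr0 : (-(Q:ℝ)⁻¹) ≤ 0 := by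
    simp only [neg_nonpos]; positivity
  have hrabs : |(-(Q:ℝ)⁻¹)| < 1 := by
    rw [abs_neg, abs_inv, abs_of_pos hQpos, inv_lt_one_iff₀]
    right; linarith
  have hNcast : (((Q-1 : ℤ)):ℝ) = (Q:ℝ) - 1 := by push_cast; ring
  have hsq : 1 - (-(Q:ℝ)⁻¹)^2 = ((Q:ℝ)^2-1)/(Q:ℝ)^2 := by field_simp
  have hL : ((Q-1:ℤ):ℝ) * (-(Q:ℝ)⁻¹) * (1-(-(Q:ℝ)⁻¹)^2)⁻¹ = -(Q:ℝ)/((Q:ℝ)+1) := by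
    rw [hNcast, hsq]
    field_simp
    ring_nf
  have hM : ((Q-1:ℤ):ℝ) * (1-(-(Q:ℝ)⁻¹)^2)⁻¹ = (Q:ℝ)^2/((Q:ℝ)+1) := by
    rw [hNcast, hsq]
    field_simp
    ring_nf
  set t : ℝ := ((Q:ℝ)+1)⁻¹ with htdef
  have htpos : 0 < t := by rw [htdef]; positivity
  have ht1 : t * (Q:ℝ) + t = 1 := by
    rw [htdef]
    field_simp
  have heqL : -(Q:ℝ)/((Q:ℝ)+1) = -((Q:ℝ)*t) := by
    rw [htdef, div_eq_mul_inv]; ring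
  have heqM : (Q:ℝ)^2/((Q:ℝ)+1) = (Q:ℝ)^2*t := by
    rw [htdef, div_eq_mul_inv]
  apply Set.Subset.antisymm
  · intro x hx
    have h := oneDim_bounds_neg _ (Q-1) (le_refl _) _ hr0 hrabs x hx
    rw [hL, hM] at h
    exact Set.mem_Icc.2 h
  · apply Icc_subset_oneDim (Set.Icc 0 (Q-1)) (Q-1) (le_refl _) _
      (by simp only [ne_eq, neg_eq_zero, inv_eq_zero]; exact hQne)
      hrabs _ _ (fun y => min (Q-1) (max 0 ⌈y - ((Q:ℝ)+1)⁻¹⌉))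
    intro y hy
    rw [Set.mem_Icc, heqL, heqM] at hy
    set a : ℝ := y - ((Q:ℝ)+1)⁻¹ with hadef
    have ha_t : a = y - t := by rw [hadef, htdef]
    have hceil1 : a ≤ ((⌈a⌉:ℤ):ℝ) := Int.le_ceil a
    have hceil2 : ((⌈a⌉:ℤ):ℝ) < a + 1 := Int.ceil_lt_add_one a
    have halow : -1 ≤ a := by
      rw [ha_t]
      nlinarith [hy.1, ht1, htpos]
    have haup : a ≤ (Q:ℝ) - 1 := by
      rw [ha_t]
      nlinarith [hy.2, ht1, htpos]
    have hcast : ((min (Q-1) (max 0 ⌈a⌉) : ℤ):ℝ)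
        = min ((Q:ℝ)-1) (max 0 ((⌈a⌉:ℤ):ℝ)) := by
      rw [Int.cast_min, Int.cast_max, Int.cast_sub, Int.cast_one, Int.cast_zero]
    constructor
    · rw [Set.mem_Icc]
      constructor
      · exact le_min (by omega) (le_max_left _ _)
      · exact min_le_left _ _
    · rw [Set.mem_Icc]
      have hd_ge : a ≤ ((min (Q-1) (max 0 ⌈a⌉) : ℤ):ℝ) := by
        rw [hcast]
        exact le_min haup (le_trans hceil1 (le_max_right _ _))
      have hd_le : ((min (Q-1) (max 0 ⌈a⌉) : ℤ):ℝ) ≤ a + 1 := by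
        rw [hcast]
        exact le_trans (min_le_right _ _) (max_le (by linarith) (le_of_lt hceil2))
      have hdiv : (y - ((min (Q-1) (max 0 ⌈a⌉) : ℤ):ℝ)) / (-(Q:ℝ)⁻¹)
          = (((min (Q-1) (max 0 ⌈a⌉) : ℤ):ℝ) - y) * (Q:ℝ) := by
        rw [div_eq_mul_inv, inv_neg, inv_inv]
        ring
      rw [hdiv, heqL, heqM]
      have h1 : -((Q:ℝ)+1)⁻¹ ≤ ((min (Q-1) (max 0 ⌈a⌉) : ℤ):ℝ) - y := by
        rw [hadef] at hd_ge
        linarith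
      have h2 : ((min (Q-1) (max 0 ⌈a⌉) : ℤ):ℝ) - y ≤ 1 - ((Q:ℝ)+1)⁻¹ := by
        rw [hadef] at hd_le
        linarith
      rw [← htdef] at h1 h2
      constructor
      · nlinarith [h1, hQpos]
      · nlinarith [h2, hQpos, ht1]

lemma conn_image (vv ww : Fin 2 → ℝ) (r : ℝ) (a b : ℝ) (hab : a ≤ b) :
    IsConnected ((fun p : ℝ × ℝ => (r * p.1) • vv + p.2 • ww) '' (Set.Icc a b ×ˢ Set.Icc a b)) := by
  apply IsConnected.image
  · constructor
    · exact ⟨(a, a), Set.mem_prod.2 ⟨Set.mem_Icc.2 ⟨le_refl a, hab⟩, Set.mem_Icc.2 ⟨le_refl a, hab⟩⟩⟩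
    · exact IsPreconnected.prod isPreconnected_Icc isPreconnected_Icc
  · apply Continuous.continuousOn
    apply Continuous.add
    · exact (continuous_const.mul continuous_fst).smul continuous_const
    · exact continuous_snd.smul continuous_const

end Stmt12Aux

open Stmt12Aux

/-- when `p = 0` (characteristic polynomial `x² + q`, `|q| ≥ 3`) and
`m ≥ -1`, the fractal with digit set `{0, 1, …, |q|-2, |q|+m} v` is connected iff
`m = -1`, i.e. iff the digit set is `{0, 1, …, |q|-1} v`. -/
theorem stmt12 (A : Matrix (Fin 2) (Fin 2) ℤ) (q m : ℤ)
    (hA : IsExpanding A)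
    (hchar : A.charpoly = X ^ 2 + C q)
    (hq : 3 ≤ |q|)
    (hm : -1 ≤ m)
    (v : Fin 2 → ℤ)
    (hv : LinearIndependent ℝ ![vecR v, (toR A).mulVec (vecR v)]) :
    IsConnected (attractor A (Set.Icc (0 : ℤ) (|q| - 2) ∪ {|q| + m}) v) ↔ m = -1 := by

  have hq0 : q ≠ 0 := by
    intro h; rw [h] at hq; simp at hq
  have hqR : (q:ℝ) ≠ 0 := Int.cast_ne_zero.2 hq0
  have hqabs : (3:ℝ) ≤ |(q:ℝ)| := by
    rw [← Int.cast_abs]; exact_mod_cast hq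
  have habs : |(-(q:ℝ)⁻¹)| < 1 := by
    rw [abs_neg, abs_inv, inv_lt_one_iff₀]; right; linarith
  have hsign : q ≤ -3 ∨ 3 ≤ q := by
    rcases le_or_gt q 0 with h | h
    · left; rw [abs_of_nonpos h] at hq; omega
    · right; rw [abs_of_pos h] at hq; omega
  -- the coordinate functional
  have hwv : (toR A)⁻¹.mulVec (vecR v) = (-(q:ℝ)⁻¹) • (toR A).mulVec (vecR v) := by
    rw [toR_inv hchar hqR, Matrix.smul_mulVec]
  have hvw : LinearIndependent ℝ ![vecR v, (toR A)⁻¹.mulVec (vecR v)] := by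
    rw [linearIndependent_fin2] at hv ⊢
    simp only [Matrix.cons_val_one, Matrix.head_cons, Matrix.cons_val_zero] at hv ⊢
    constructor
    · rw [hwv]
      exact smul_ne_zero (by simp [hqR]) hv.1
    · intro a ha
      rw [hwv, smul_smul] at ha
      exact hv.2 _ ha
  have hcard : Fintype.card (Fin 2) = Module.finrank ℝ (Fin 2 → ℝ) := by
    simp [Module.finrank_fintype_fun_eq_card]
  let b : Module.Basis (Fin 2) ℝ (Fin 2 → ℝ) := basisOfLinearIndependentOfCardEqFinrank hvw hcard
  have hb : ⇑b = ![vecR v, (toR A)⁻¹.mulVec (vecR v)] :=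
    coe_basisOfLinearIndependentOfCardEqFinrank hvw hcard
  have hb0 : b 0 = vecR v := by rw [hb]; simp
  have hb1 : b 1 = (toR A)⁻¹.mulVec (vecR v) := by rw [hb]; simp
  let φ : (Fin 2 → ℝ) →ₗ[ℝ] ℝ := b.coord 1
  have hφcont : Continuous φ := LinearMap.continuous_of_finiteDimensional φ
  have hφ : ∀ c t : ℝ, φ (c • vecR v + t • (toR A)⁻¹.mulVec (vecR v)) = t := by
    intro c t
    rw [← hb1, ← hb0]
    simp only [φ, Module.Basis.coord_apply, map_add, _root_.map_smul, Module.Basis.repr_self]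
    simp [Finsupp.single_apply]
  constructor
  · -- connected → m = -1
    intro hconn
    by_contra hm1
    have hm0 : 0 ≤ m := by omega
    obtain ⟨c, hc0, hcN, hcut⟩ := exists_cut q m hq hm0
    have hD : Set.Icc (0 : ℤ) (|q| - 2) ∪ {|q| + m} ⊆ Set.Icc 0 (|q| + m) := by
      intro d hd
      rcases hd with hd | hd
      · rw [Set.mem_Icc] at hd ⊢; omega
      · rw [Set.mem_singleton_iff] at hd; rw [Set.mem_Icc]; omega
    have hattr := attractor_eq hchar hqR habs v _ (|q| + m) hD
    set U : Set (Fin 2 → ℝ) := φ ⁻¹' (Set.Iio c) with hUdef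
    set V : Set (Fin 2 → ℝ) := φ ⁻¹' (Set.Ioi c) with hVdef
    have hUopen : IsOpen U := isOpen_Iio.preimage hφcont
    have hVopen : IsOpen V := isOpen_Ioi.preimage hφcont
    have h0D : (0:ℤ) ∈ Set.Icc (0 : ℤ) (|q| - 2) ∪ {|q| + m} := by
      left; rw [Set.mem_Icc]; omega
    have hND : (|q| + m) ∈ Set.Icc (0 : ℤ) (|q| - 2) ∪ {|q| + m} := by
      right; rfl
    have h0F : (0:ℝ) ∈ oneDim (Set.Icc (0 : ℤ) (|q| - 2) ∪ {|q| + m}) (-(q:ℝ)⁻¹) := by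
      have := single_mem_oneDim _ (-(q:ℝ)⁻¹) 0 h0D h0D
      simpa using this
    have hNF : ((|q| + m : ℤ):ℝ) ∈ oneDim (Set.Icc (0 : ℤ) (|q| - 2) ∪ {|q| + m}) (-(q:ℝ)⁻¹) :=
      single_mem_oneDim _ (-(q:ℝ)⁻¹) _ hND h0D
    have hcover : attractor A (Set.Icc (0 : ℤ) (|q| - 2) ∪ {|q| + m}) v ⊆ U ∪ V := by
      intro x hx
      rw [hattr] at hx
      obtain ⟨⟨s, t⟩, ⟨hs, ht⟩, rfl⟩ := hx
      have hφx := hφ ((-(q:ℝ)⁻¹) * s) t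
      rcases lt_or_gt_of_ne (hcut t ht) with h | h
      · left; rw [hUdef, Set.mem_preimage, Set.mem_Iio, hφx]; exact h
      · right; rw [hVdef, Set.mem_preimage, Set.mem_Ioi, hφx]; exact h
    have hmemlo : (fun p : ℝ × ℝ => ((-(q:ℝ)⁻¹) * p.1) • vecR v + p.2 • ((toR A)⁻¹.mulVec (vecR v))) (0, 0)
        ∈ attractor A (Set.Icc (0 : ℤ) (|q| - 2) ∪ {|q| + m}) v := by
      rw [hattr]; exact ⟨(0,0), ⟨h0F, h0F⟩, rfl⟩
    have hmemhi : (fun p : ℝ × ℝ => ((-(q:ℝ)⁻¹) * p.1) • vecR v + p.2 • ((toR A)⁻¹.mulVec (vecR v))) (0, ((|q| + m : ℤ):ℝ))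
        ∈ attractor A (Set.Icc (0 : ℤ) (|q| - 2) ∪ {|q| + m}) v := by
      rw [hattr]; exact ⟨(0, ((|q| + m : ℤ):ℝ)), ⟨h0F, hNF⟩, rfl⟩
    have hlomem : ((attractor A (Set.Icc (0 : ℤ) (|q| - 2) ∪ {|q| + m}) v) ∩ U).Nonempty := by
      refine ⟨_, hmemlo, ?_⟩
      rw [hUdef, Set.mem_preimage, Set.mem_Iio]
      rw [hφ]
      exact hc0
    have hhimem : ((attractor A (Set.Icc (0 : ℤ) (|q| - 2) ∪ {|q| + m}) v) ∩ V).Nonempty := by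
      refine ⟨_, hmemhi, ?_⟩
      rw [hVdef, Set.mem_preimage, Set.mem_Ioi]
      rw [hφ]
      exact hcN
    obtain ⟨y, _, hyU, hyV⟩ := hconn.isPreconnected U V hUopen hVopen hcover hlomem hhimem
    rw [hUdef, Set.mem_preimage, Set.mem_Iio] at hyU
    rw [hVdef, Set.mem_preimage, Set.mem_Ioi] at hyV
    linarith
  · -- m = -1 → connected
    intro hm1
    subst hm1
    have hDfull : Set.Icc (0 : ℤ) (|q| - 2) ∪ {|q| + -1} = Set.Icc 0 (|q| - 1) := by
      ext z
      simp only [Set.mem_union, Set.mem_Icc, Set.mem_singleton_iff]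
      omega
    rw [hDfull]
    have hattr := attractor_eq hchar hqR habs v (Set.Icc 0 (|q| - 1)) (|q| - 1) (le_refl _)
    rw [hattr]
    rcases hsign with hneg | hpos
    · -- q < 0 : r = |q|⁻¹
      have hQq : ((|q| : ℤ):ℝ) = -(q:ℝ) := by
        rw [abs_of_nonpos (by omega : q ≤ 0)]; push_cast; ring
      have hrq : -(q:ℝ)⁻¹ = ((|q| : ℤ):ℝ)⁻¹ := by rw [hQq, inv_neg]
      rw [hrq, oneDim_eq_pos |q| hq]
      apply conn_image
      have : (0:ℝ) ≤ ((|q| : ℤ):ℝ) := by positivity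
      linarith
    · -- q > 0 : r = -|q|⁻¹
      have hQq : ((|q| : ℤ):ℝ) = (q:ℝ) := by
        rw [abs_of_pos (by omega : 0 < q)]
      have hrq : -(q:ℝ)⁻¹ = -((|q| : ℤ):ℝ)⁻¹ := by rw [hQq]
      rw [hrq, oneDim_eq_neg |q| hq]
      apply conn_image
      have h3 : (3:ℝ) ≤ ((|q| : ℤ):ℝ) := by exact_mod_cast hq
      have h4 : (0:ℝ) < ((|q| : ℤ):ℝ) + 1 := by linarith
      rw [div_le_div_iff₀ h4 h4]
      nlinarith
end
end
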